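/- arXiv:0807.2349 — 4 statements merged into one kernel-verified Lean document; each statement's English description precedes it below -/
import Mathlib

section
/- Let (R_j) be i.i.d. nonnegative random variables with common law μ such that there exist A, c > 0 with μ([x,∞)) ≤ A·exp(-c·√x) for all x ≥ 0. Then the mean M := ∫ x dμ(x) is finite, and for every f > M there exist h(f) > 0 and n(f) such that for all n ≥ n(f), P((R_1 + ⋯ + R_n)/n ≥ f) ≤ exp(-h(f)·√n). -/
open MeasureTheory ProbabilityTheory Filter
open scoped Topology

/-- Elementary inequality `exp y ≤ 1 + y + y² exp y` for `y ≥ 0`. -/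
lemma ldp_aux_exp_le (y : ℝ) (hy : 0 ≤ y) :
    Real.exp y ≤ 1 + y + y ^ 2 * Real.exp y := by
  have h0 : (-y) + 1 ≤ Real.exp (-y) := Real.add_one_le_exp (-y)
  have hpos : 0 < Real.exp y := Real.exp_pos y
  have hmul : ((-y) + 1) * Real.exp y ≤ Real.exp (-y) * Real.exp y :=
    mul_le_mul_of_nonneg_right h0 hpos.le
  rw [← Real.exp_add, neg_add_cancel, Real.exp_zero] at hmul
  -- hence exp y ≤ 1 + y * exp y
  have h1 : Real.exp y ≤ 1 + y * Real.exp y := by nlinarith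
  nlinarith [mul_le_mul_of_nonneg_left h1 hy]

/-- `√n → ∞`. -/
lemma ldp_aux_sqrt_tendsto : Tendsto (fun n : ℕ => Real.sqrt n) atTop atTop := by
  refine tendsto_atTop_atTop.2 fun b => ⟨⌈b * b⌉₊, fun n hn => ?_⟩
  rcases le_or_gt b 0 with hb | hb
  · exact hb.trans (Real.sqrt_nonneg _)
  · have h1 : b * b ≤ (n : ℝ) := le_trans (Nat.le_ceil _) (by exact_mod_cast hn)
    calc b = Real.sqrt (b * b) := (Real.sqrt_mul_self hb.le).symm
    _ ≤ Real.sqrt n := Real.sqrt_le_sqrt h1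

/-- `√(x+1) ≤ √x + 1` for `x ≥ 0`. -/
lemma ldp_aux_sqrt_add_one (x : ℝ) (hx : 0 ≤ x) :
    Real.sqrt (x + 1) ≤ Real.sqrt x + 1 := by
  have h : x + 1 ≤ (Real.sqrt x + 1) ^ 2 := by
    nlinarith [Real.sq_sqrt hx, Real.sqrt_nonneg x]
  have := Real.sqrt_le_sqrt h
  rwa [Real.sqrt_sq (by positivity)] at this

/-- `exp (-δ √k) ≤ C / k^5` for `k ≥ 1`. -/
lemma ldp_aux_exp_sqrt_le (δ : ℝ) (hδ : 0 < δ) (k : ℕ) (hk : 1 ≤ k) :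
    Real.exp (-(δ * Real.sqrt k)) ≤ (Nat.factorial 10 : ℝ) / (δ ^ 10 * (k : ℝ) ^ 5) := by
  have hk0 : (0:ℝ) < (k : ℝ) := by exact_mod_cast hk
  have hpow : (δ * Real.sqrt k) ^ 10 / (Nat.factorial 10 : ℝ) ≤ Real.exp (δ * Real.sqrt k) :=
    Real.pow_div_factorial_le_exp (x := δ * Real.sqrt k) (by positivity) 10
  have hsq : Real.sqrt k ^ 10 = (k : ℝ) ^ 5 := by
    have h2 : Real.sqrt k ^ 2 = (k : ℝ) := Real.sq_sqrt hk0.le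
    calc Real.sqrt k ^ 10 = (Real.sqrt k ^ 2) ^ 5 := by ring
    _ = (k : ℝ) ^ 5 := by rw [h2]
  have hfac : (0:ℝ) < (Nat.factorial 10 : ℝ) := by positivity
  have hE : 0 < Real.exp (δ * Real.sqrt k) := Real.exp_pos _
  have hb : δ ^ 10 * (k:ℝ) ^ 5 / (Nat.factorial 10 : ℝ) ≤ Real.exp (δ * Real.sqrt k) := by
    have h : (δ * Real.sqrt k) ^ 10 = δ ^ 10 * (k:ℝ) ^ 5 := by rw [mul_pow, hsq]
    rwa [h] at hpow
  have hb' : δ ^ 10 * (k:ℝ) ^ 5 ≤ (Nat.factorial 10 : ℝ) * Real.exp (δ * Real.sqrt k) := by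
    rw [div_le_iff₀ hfac] at hb
    linarith [hb]
  rw [Real.exp_neg, inv_eq_one_div, div_le_div_iff₀ hE (by positivity)]
  linarith [hb']

/-- Summability of `(k+1)^3 exp (-δ √k)`. -/
lemma ldp_aux_summable (δ : ℝ) (hδ : 0 < δ) :
    Summable (fun k : ℕ => ((k : ℝ) + 1) ^ 3 * Real.exp (-(δ * Real.sqrt k))) := by
  rw [← summable_nat_add_iff 1]
  set C : ℝ := 8 * ((Nat.factorial 10 : ℝ) / δ ^ 10) with hC
  have hsum : Summable (fun k : ℕ => C * (1 / ((k : ℝ) + 1) ^ 2)) := by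
    apply Summable.mul_left
    have h0 : Summable (fun k : ℕ => 1 / (k : ℝ) ^ 2) :=
      Real.summable_one_div_nat_pow.2 (by norm_num)
    have h1 := (summable_nat_add_iff (f := fun k : ℕ => 1 / (k : ℝ) ^ 2) 1).2 h0
    refine h1.congr fun k => ?_
    push_cast
    ring_nf
  refine Summable.of_nonneg_of_le (fun k => by positivity) (fun k => ?_) hsum
  have hkpos : (0:ℝ) < (k:ℝ) + 1 := by positivity
  have hcast : ((k + 1 : ℕ) : ℝ) = (k : ℝ) + 1 := by push_cast; ring
  have e2 : Real.exp (-(δ * Real.sqrt ((k + 1 : ℕ) : ℝ))) ≤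
      (Nat.factorial 10 : ℝ) / (δ ^ 10 * ((k:ℝ) + 1) ^ 5) := by
    have h := ldp_aux_exp_sqrt_le δ hδ (k + 1) (Nat.le_add_left 1 k)
    rw [hcast] at h ⊢
    exact h
  have e1 : (((k + 1 : ℕ) : ℝ) + 1) ^ 3 ≤ 8 * ((k:ℝ) + 1) ^ 3 := by
    rw [hcast]
    have h8 : ((k:ℝ) + 1 + 1) ^ 3 ≤ (2 * ((k:ℝ) + 1)) ^ 3 := by
      apply pow_le_pow_left₀ (by positivity) (by linarith)
    calc ((k:ℝ) + 1 + 1) ^ 3 ≤ (2 * ((k:ℝ) + 1)) ^ 3 := h8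
    _ = 8 * ((k:ℝ) + 1) ^ 3 := by ring
  have hmul : (((k + 1 : ℕ) : ℝ) + 1) ^ 3 * Real.exp (-(δ * Real.sqrt ((k + 1 : ℕ) : ℝ)))
      ≤ (8 * ((k:ℝ) + 1) ^ 3) * ((Nat.factorial 10 : ℝ) / (δ ^ 10 * ((k:ℝ) + 1) ^ 5)) :=
    mul_le_mul e1 e2 (Real.exp_nonneg _) (by positivity)
  refine hmul.trans (le_of_eq ?_)
  rw [hC]
  field_simp
/-- Monotonicity of the dominating function on `[0, ∞)`. -/
lemma ldp_aux_G_mono (c : ℝ) (hc : 0 ≤ c) {x y : ℝ} (hx : 0 ≤ x) (hxy : x ≤ y) :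
    (x ^ 2 + 1) * Real.exp (c * Real.sqrt x) ≤ (y ^ 2 + 1) * Real.exp (c * Real.sqrt y) := by
  have h1 : x ^ 2 + 1 ≤ y ^ 2 + 1 := by nlinarith
  have h2 : Real.exp (c * Real.sqrt x) ≤ Real.exp (c * Real.sqrt y) :=
    Real.exp_le_exp.2 (mul_le_mul_of_nonneg_left (Real.sqrt_le_sqrt hxy) hc)
  have := mul_le_mul h1 h2 (Real.exp_nonneg _) (by positivity)
  exact this

/-- Finiteness of the dominating lintegral under the tail assumption. -/
lemma ldp_aux_lint_finite (μ : Measure ℝ) (A c : ℝ) (hA : 0 < A) (hc : 0 < c)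
    (hzero : μ (Set.Iio 0) = 0)
    (htail : ∀ x : ℝ, 0 ≤ x →
      μ (Set.Ici x) ≤ ENNReal.ofReal (A * Real.exp (-c * Real.sqrt x))) :
    ∫⁻ x, ENNReal.ofReal ((x ^ 2 + 1) * Real.exp (c / 2 * Real.sqrt x)) ∂μ < ⊤ := by
  have hres : μ.restrict (Set.Ici 0) = μ := by
    apply Measure.restrict_eq_self_of_ae_mem
    rw [ae_iff]
    convert hzero using 2
    ext x
    simp [Set.mem_Iio, not_le]
  have hsub : Set.Ici (0:ℝ) ⊆ ⋃ k : ℕ, Set.Ico (k : ℝ) ((k : ℝ) + 1) := by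
    intro x hx
    exact Set.mem_iUnion.2 ⟨⌊x⌋₊, ⟨Nat.floor_le hx, Nat.lt_floor_add_one x⟩⟩
  set G : ℝ → ℝ := fun x => (x ^ 2 + 1) * Real.exp (c / 2 * Real.sqrt x) with hGdef
  set b : ℕ → ℝ := fun k => G ((k:ℝ) + 1) * (A * Real.exp (-c * Real.sqrt (k:ℝ))) with hbdef
  have hbnn : ∀ k, 0 ≤ b k := fun k => by
    have : (0:ℝ) ≤ G ((k:ℝ) + 1) := by rw [hGdef]; positivity
    positivity
  have hble : ∀ k : ℕ, b k ≤
      (2 * A * Real.exp (c/2)) * (((k:ℝ) + 1) ^ 3 * Real.exp (-(c/2 * Real.sqrt (k:ℝ)))) := by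
    intro k
    have ha : (0:ℝ) ≤ (k:ℝ) := Nat.cast_nonneg k
    have hs : (0:ℝ) ≤ Real.sqrt (k:ℝ) := Real.sqrt_nonneg _
    have stepA : Real.exp (c/2 * Real.sqrt ((k:ℝ)+1)) ≤
        Real.exp (c/2) * Real.exp (c/2 * Real.sqrt (k:ℝ)) := by
      rw [← Real.exp_add]
      apply Real.exp_le_exp.2
      have h := ldp_aux_sqrt_add_one (k:ℝ) ha
      nlinarith [h, hc.le]
    have stepC : ((k:ℝ)+1)^2 + 1 ≤ 2*((k:ℝ)+1)^3 := by nlinarith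
    have hexp : Real.exp (c/2 * Real.sqrt (k:ℝ)) * Real.exp (-c * Real.sqrt (k:ℝ)) =
        Real.exp (-(c/2 * Real.sqrt (k:ℝ))) := by
      rw [← Real.exp_add]; congr 1; ring
    calc b k = (((k:ℝ)+1)^2+1) * Real.exp (c/2 * Real.sqrt ((k:ℝ)+1)) *
        (A * Real.exp (-c * Real.sqrt (k:ℝ))) := by rw [hbdef, hGdef]
    _ ≤ (2*((k:ℝ)+1)^3) * (Real.exp (c/2) * Real.exp (c/2 * Real.sqrt (k:ℝ))) *
        (A * Real.exp (-c * Real.sqrt (k:ℝ))) := by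
        apply mul_le_mul _ le_rfl (by positivity) (by positivity)
        exact mul_le_mul stepC stepA (Real.exp_nonneg _) (by positivity)
    _ = (2 * A * Real.exp (c/2)) * (((k:ℝ)+1)^3 *
        (Real.exp (c/2 * Real.sqrt (k:ℝ)) * Real.exp (-c * Real.sqrt (k:ℝ)))) := by ring
    _ = (2 * A * Real.exp (c/2)) * (((k:ℝ)+1)^3 * Real.exp (-(c/2 * Real.sqrt (k:ℝ)))) := by
        rw [hexp]
  have hbsummable : Summable b :=
    Summable.of_nonneg_of_le hbnn hble
      ((ldp_aux_summable (c/2) (by positivity)).mul_left _)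
  have hcalc : ∫⁻ x, ENNReal.ofReal (G x) ∂μ ≤ ∑' k : ℕ, ENNReal.ofReal (b k) := by
    calc ∫⁻ x, ENNReal.ofReal (G x) ∂μ
        = ∫⁻ x in Set.Ici (0:ℝ), ENNReal.ofReal (G x) ∂μ := by rw [hres]
    _ ≤ ∫⁻ x in ⋃ k : ℕ, Set.Ico (k : ℝ) ((k : ℝ) + 1), ENNReal.ofReal (G x) ∂μ :=
        lintegral_mono_set hsub
    _ ≤ ∑' k : ℕ, ∫⁻ x in Set.Ico (k : ℝ) ((k : ℝ) + 1), ENNReal.ofReal (G x) ∂μ :=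
        lintegral_iUnion_le _ _
    _ ≤ ∑' k : ℕ, ENNReal.ofReal (b k) := by
        refine ENNReal.tsum_le_tsum fun k => ?_
        have h1 : ∫⁻ x in Set.Ico (k : ℝ) ((k : ℝ) + 1), ENNReal.ofReal (G x) ∂μ ≤
            ∫⁻ _ in Set.Ico (k : ℝ) ((k : ℝ) + 1), ENNReal.ofReal (G ((k:ℝ) + 1)) ∂μ := by
          refine setLIntegral_mono measurable_const fun x hx => ?_
          refine ENNReal.ofReal_le_ofReal ?_
          exact ldp_aux_G_mono (c/2) (by positivity)
            (le_trans (Nat.cast_nonneg k) hx.1) hx.2.le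
        rw [setLIntegral_const] at h1
        refine h1.trans ?_
        have h2 : μ (Set.Ico (k : ℝ) ((k : ℝ) + 1)) ≤
            ENNReal.ofReal (A * Real.exp (-c * Real.sqrt (k:ℝ))) :=
          le_trans (measure_mono Set.Ico_subset_Ici_self) (htail _ (Nat.cast_nonneg k))
        calc ENNReal.ofReal (G ((k:ℝ) + 1)) * μ (Set.Ico (k : ℝ) ((k : ℝ) + 1))
            ≤ ENNReal.ofReal (G ((k:ℝ) + 1)) *
              ENNReal.ofReal (A * Real.exp (-c * Real.sqrt (k:ℝ))) :=
            mul_le_mul_right h2 _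
        _ = ENNReal.ofReal (b k) := by
            rw [hbdef, ← ENNReal.ofReal_mul (by rw [hGdef]; positivity)]
  refine lt_of_le_of_lt hcalc ?_
  rw [← ENNReal.ofReal_tsum_of_nonneg hbnn hbsummable]
  exact ENNReal.ofReal_lt_top

set_option maxHeartbeats 1600000 in
/-- Large deviations upper bound for i.i.d. nonnegative random variables with
stretched-exponential tails of exponent 1/2: the mean `M = ∫ x dμ` is finite, and for
every `f > M` there are `h(f) > 0` and `n(f)` such that for `n ≥ n(f)`,
`P((R_1 + ⋯ + R_n)/n ≥ f) ≤ exp(-h(f) √n)`. -/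
theorem ldp_sqrt_tails
    {Ω : Type} [MeasurableSpace Ω] (P : Measure Ω) [IsProbabilityMeasure P]
    (R : ℕ → Ω → ℝ) (μ : Measure ℝ)
    (hmeas : ∀ j, Measurable (R j))
    (hindep : iIndepFun R P)
    (hlaw : ∀ j, Measure.map (R j) P = μ)
    (hnonneg : ∀ j ω, 0 ≤ R j ω)
    (A c : ℝ) (hA : 0 < A) (hc : 0 < c)
    (htail : ∀ x : ℝ, 0 ≤ x →
      μ (Set.Ici x) ≤ ENNReal.ofReal (A * Real.exp (-c * Real.sqrt x))) :
    Integrable (fun x => x) μ ∧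
      ∀ f : ℝ, (∫ x, x ∂μ) < f →
        ∃ h : ℝ, 0 < h ∧ ∃ N : ℕ, ∀ n : ℕ, N ≤ n →
          P {ω | f ≤ (∑ i ∈ Finset.range n, R i ω) / n} ≤
            ENNReal.ofReal (Real.exp (-h * Real.sqrt n)) := by
  -- Basic facts about μ
  have hμprob : IsProbabilityMeasure μ := by
    rw [← hlaw 0]; exact Measure.isProbabilityMeasure_map (hmeas 0).aemeasurable
  have hzero : μ (Set.Iio 0) = 0 := by
    rw [← hlaw 0, Measure.map_apply (hmeas 0) measurableSet_Iio]
    have hpre : R 0 ⁻¹' Set.Iio 0 = ∅ := by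
      ext ω; simp [Set.mem_Iio, not_lt.2 (hnonneg 0 ω)]
    rw [hpre, measure_empty]
  have hae : ∀ᵐ x ∂μ, 0 ≤ x := by
    rw [ae_iff]; convert hzero using 2; ext x; simp [not_le]
  -- the dominating function
  have hGcont : Continuous (fun x : ℝ => (x ^ 2 + 1) * Real.exp (c / 2 * Real.sqrt x)) :=
    Continuous.mul (by continuity)
      (Real.continuous_exp.comp (continuous_const.mul Real.continuous_sqrt))
  have hGnn : ∀ x : ℝ, 0 ≤ (x ^ 2 + 1) * Real.exp (c / 2 * Real.sqrt x) := fun x => by positivity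
  have hGint : Integrable (fun x : ℝ => (x ^ 2 + 1) * Real.exp (c / 2 * Real.sqrt x)) μ := by
    refine ⟨hGcont.aestronglyMeasurable, ?_⟩
    rw [hasFiniteIntegral_iff_norm]
    have heq : ∀ x : ℝ, ENNReal.ofReal ‖(x ^ 2 + 1) * Real.exp (c / 2 * Real.sqrt x)‖ =
        ENNReal.ofReal ((x ^ 2 + 1) * Real.exp (c / 2 * Real.sqrt x)) := fun x => by
      rw [Real.norm_of_nonneg (hGnn x)]
    simp only [heq]
    exact ldp_aux_lint_finite μ A c hA hc hzero htail
  have hInt_id : Integrable (fun x : ℝ => x) μ := by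
    refine hGint.mono' aestronglyMeasurable_id ?_
    filter_upwards [hae] with x hx
    rw [Real.norm_of_nonneg hx]
    have h1 : (1:ℝ) ≤ Real.exp (c / 2 * Real.sqrt x) := Real.one_le_exp (by positivity)
    nlinarith [sq_nonneg (x - 1), mul_nonneg (by positivity : (0:ℝ) ≤ x ^ 2 + 1)
      (by linarith : (0:ℝ) ≤ Real.exp (c / 2 * Real.sqrt x) - 1)]
  have hg2cont : Continuous (fun x : ℝ => x ^ 2 * Real.exp (c / 2 * Real.sqrt x)) :=
    Continuous.mul (by continuity)
      (Real.continuous_exp.comp (continuous_const.mul Real.continuous_sqrt))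
  have hg2 : Integrable (fun x : ℝ => x ^ 2 * Real.exp (c / 2 * Real.sqrt x)) μ := by
    refine hGint.mono' hg2cont.aestronglyMeasurable ?_
    filter_upwards with x
    rw [Real.norm_of_nonneg (by positivity)]
    have hE : (0:ℝ) ≤ Real.exp (c / 2 * Real.sqrt x) := (Real.exp_pos _).le
    nlinarith
  refine ⟨hInt_id, ?_⟩
  intro f hf
  set M := ∫ x, x ∂μ with hM
  set K := ∫ x, x ^ 2 * Real.exp (c / 2 * Real.sqrt x) ∂μ with hK
  have hM0 : 0 ≤ M := integral_nonneg_of_ae hae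
  have hK0 : 0 ≤ K := integral_nonneg fun x => by positivity
  have hfM : M < f := hf
  set h0 : ℝ := c / 2 * (f - M) with hh0
  have hh0pos : 0 < h0 := by
    have : 0 < f - M := by linarith
    positivity
  set h : ℝ := min c h0 / 2 with hh
  have hminpos : 0 < min c h0 := lt_min hc hh0pos
  have hhpos : 0 < h := by rw [hh]; linarith
  have hhc : h < c := by
    have h1 : min c h0 ≤ c := min_le_left _ _
    rw [hh]; linarith
  have hhh0 : h < h0 := by
    have h1 : min c h0 ≤ h0 := min_le_right _ _
    rw [hh]; linarith
  clear_value M K h0 h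
  refine ⟨h, hhpos, ?_⟩
  -- the key estimate for each n ≥ 1
  have key : ∀ n : ℕ, 1 ≤ n →
      P {ω | f ≤ (∑ i ∈ Finset.range n, R i ω) / n} ≤
        ENNReal.ofReal (A * n * Real.exp (-c * Real.sqrt n) +
          Real.exp ((c/2)^2 * K) * Real.exp (-h0 * Real.sqrt n)) := by
    intro n hn
    have hn0 : (0:ℝ) < n := by exact_mod_cast hn
    have hsn : 0 < Real.sqrt n := Real.sqrt_pos.2 hn0
    set t : ℝ := (c/2) / Real.sqrt n with ht
    have ht0 : 0 < t := by rw [ht]; positivity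
    set X : ℕ → Ω → ℝ := fun i ω => min (R i ω) n with hX
    have hXmeas : ∀ i, Measurable (X i) := fun i => (hmeas i).min measurable_const
    have hXindep : iIndepFun X P :=
      hindep.comp (fun _ => fun x : ℝ => min x n) (fun _ => measurable_id.min measurable_const)
    have hXle : ∀ i ω, X i ω ≤ n := fun i ω => min_le_right _ _
    -- event inclusion
    have hincl : {ω | f ≤ (∑ i ∈ Finset.range n, R i ω) / n} ⊆
        (⋃ i ∈ Finset.range n, {ω | (n:ℝ) < R i ω}) ∪
        {ω | f * n ≤ ∑ i ∈ Finset.range n, X i ω} := by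
      intro ω hω
      by_cases hcase : ∀ i ∈ Finset.range n, R i ω ≤ (n:ℝ)
      · right
        have hsum : ∑ i ∈ Finset.range n, X i ω = ∑ i ∈ Finset.range n, R i ω :=
          Finset.sum_congr rfl fun i hi => min_eq_left (hcase i hi)
        rw [Set.mem_setOf_eq, hsum]
        rw [Set.mem_setOf_eq, le_div_iff₀ hn0] at hω
        exact hω
      · left
        push_neg at hcase
        obtain ⟨i, hi, hgt⟩ := hcase
        exact Set.mem_biUnion hi hgt
    -- first part : some variable exceeds n
    have hpart1 : P (⋃ i ∈ Finset.range n, {ω | (n:ℝ) < R i ω}) ≤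
        ENNReal.ofReal (A * n * Real.exp (-c * Real.sqrt n)) := by
      refine le_trans (measure_biUnion_finset_le _ _) ?_
      have hone : ∀ i, P {ω | (n:ℝ) < R i ω} ≤
          ENNReal.ofReal (A * Real.exp (-c * Real.sqrt n)) := by
        intro i
        have hset : {ω | (n:ℝ) < R i ω} = R i ⁻¹' Set.Ioi (n:ℝ) := rfl
        rw [hset, ← Measure.map_apply (hmeas i) measurableSet_Ioi, hlaw i]
        exact le_trans (measure_mono Set.Ioi_subset_Ici_self) (htail n (by positivity))
      refine le_trans (Finset.sum_le_sum fun i _ => hone i) ?_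
      rw [Finset.sum_const, Finset.card_range, nsmul_eq_mul,
        ← ENNReal.ofReal_natCast n, ← ENNReal.ofReal_mul (Nat.cast_nonneg n)]
      exact ENNReal.ofReal_le_ofReal (le_of_eq (by ring))
    -- Chernoff part
    have hSmeas : Measurable (fun ω => ∑ i ∈ Finset.range n, X i ω) := by
      apply Finset.measurable_sum
      exact fun i _ => hXmeas i
    have hSle : ∀ ω, (∑ i ∈ Finset.range n, X i ω) ≤ (n:ℝ) * n := fun ω => by
      calc (∑ i ∈ Finset.range n, X i ω) ≤ ∑ _i ∈ Finset.range n, (n:ℝ) :=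
        Finset.sum_le_sum fun i _ => hXle i ω
      _ = (n:ℝ) * n := by rw [Finset.sum_const, Finset.card_range, nsmul_eq_mul]
    have hint : Integrable (fun ω => Real.exp (t * ∑ i ∈ Finset.range n, X i ω)) P := by
      refine Integrable.mono' (integrable_const (Real.exp (t * ((n:ℝ) * n))))
        (Real.measurable_exp.comp (hSmeas.const_mul t)).aestronglyMeasurable ?_
      filter_upwards with ω
      rw [Real.norm_of_nonneg (Real.exp_nonneg _)]
      exact Real.exp_le_exp.2 (mul_le_mul_of_nonneg_left (hSle ω) ht0.le)
    -- mgf of each truncated variable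
    have hmgfi : ∀ i, mgf (X i) P t ≤ Real.exp (t * M + t ^ 2 * K) := by
      intro i
      have hcont2 : Continuous (fun x : ℝ => Real.exp (t * min x n)) :=
        Real.continuous_exp.comp (continuous_const.mul (continuous_id.min continuous_const))
      have hmap : mgf (X i) P t = ∫ x, Real.exp (t * min x n) ∂μ := by
        rw [mgf, ← hlaw i, integral_map (hmeas i).aemeasurable hcont2.aestronglyMeasurable]
      have hlhs_int : Integrable (fun x : ℝ => Real.exp (t * min x n)) μ := by
        refine Integrable.mono' (integrable_const (Real.exp (t * n)))
          hcont2.aestronglyMeasurable ?_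
        filter_upwards with x
        rw [Real.norm_of_nonneg (Real.exp_nonneg _)]
        exact Real.exp_le_exp.2 (mul_le_mul_of_nonneg_left (min_le_right _ _) ht0.le)
      have hrhs_int : Integrable
          (fun x : ℝ => 1 + t * x + t ^ 2 * (x ^ 2 * Real.exp (c / 2 * Real.sqrt x))) μ :=
        by
          refine Integrable.add ?_ (hg2.const_mul (t ^ 2))
          exact (integrable_const (1:ℝ)).add (hInt_id.const_mul t)
      have hptwise : ∀ᵐ x : ℝ ∂μ, Real.exp (t * min x n) ≤
          1 + t * x + t ^ 2 * (x ^ 2 * Real.exp (c / 2 * Real.sqrt x)) := by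
        filter_upwards [hae] with x hx
        have hmn : 0 ≤ min x (n:ℝ) := le_min hx hn0.le
        have hy := ldp_aux_exp_le (t * min x n) (by positivity)
        have hkey : t * min x (n:ℝ) ≤ c / 2 * Real.sqrt x := by
          have hmle : min x (n:ℝ) ≤ Real.sqrt x * Real.sqrt n := by
            rcases le_total x (n:ℝ) with hxn | hxn
            · rw [min_eq_left hxn]
              nth_rewrite 1 [← Real.mul_self_sqrt hx]
              exact mul_le_mul_of_nonneg_left (Real.sqrt_le_sqrt hxn) (Real.sqrt_nonneg x)
            · rw [min_eq_right hxn]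
              nth_rewrite 1 [← Real.mul_self_sqrt hn0.le]
              exact mul_le_mul_of_nonneg_right (Real.sqrt_le_sqrt hxn) (Real.sqrt_nonneg _)
          calc t * min x (n:ℝ) ≤ t * (Real.sqrt x * Real.sqrt n) :=
            mul_le_mul_of_nonneg_left hmle ht0.le
          _ = c / 2 * Real.sqrt x := by rw [ht]; field_simp
        have hexp_le : Real.exp (t * min x n) ≤ Real.exp (c / 2 * Real.sqrt x) :=
          Real.exp_le_exp.2 hkey
        have h1 : t * min x n ≤ t * x :=
          mul_le_mul_of_nonneg_left (min_le_left _ _) ht0.le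
        have h2 : (t * min x n) ^ 2 * Real.exp (t * min x n) ≤
            t ^ 2 * (x ^ 2 * Real.exp (c / 2 * Real.sqrt x)) := by
          have hm2 : (min x (n:ℝ)) ^ 2 ≤ x ^ 2 := by
            nlinarith [min_le_left x (n:ℝ), hmn]
          calc (t * min x n) ^ 2 * Real.exp (t * min x n)
              = t ^ 2 * ((min x (n:ℝ)) ^ 2 * Real.exp (t * min x n)) := by ring
          _ ≤ t ^ 2 * (x ^ 2 * Real.exp (c / 2 * Real.sqrt x)) := by
              refine mul_le_mul_of_nonneg_left ?_ (by positivity)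
              exact mul_le_mul hm2 hexp_le (Real.exp_nonneg _) (by positivity)
        linarith [hy, h1, h2]
      have hmono := integral_mono_ae hlhs_int hrhs_int hptwise
      have hRHS : ∫ x, (1 + t * x + t ^ 2 * (x ^ 2 * Real.exp (c / 2 * Real.sqrt x))) ∂μ =
          1 + t * M + t ^ 2 * K := by
        have i12 : Integrable (fun x : ℝ => 1 + t * x) μ :=
          (integrable_const (1:ℝ)).add (hInt_id.const_mul t)
        have e3 : ∫ x, (1 + t * x + t ^ 2 * (x ^ 2 * Real.exp (c / 2 * Real.sqrt x))) ∂μ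
            = (∫ x, (1 + t * x) ∂μ) +
              ∫ x, t ^ 2 * (x ^ 2 * Real.exp (c / 2 * Real.sqrt x)) ∂μ :=
          integral_add i12 (hg2.const_mul (t ^ 2))
        have e4 : ∫ x, (1 + t * x) ∂μ = (∫ _x : ℝ, (1:ℝ) ∂μ) + ∫ x, t * x ∂μ :=
          integral_add (integrable_const (1:ℝ)) (hInt_id.const_mul t)
        rw [e3, e4, integral_const_mul, integral_const_mul, integral_const]
        simp [hM, hK]
      have hfin : mgf (X i) P t ≤ 1 + t * M + t ^ 2 * K := by
        rw [hmap]; rw [hRHS] at hmono; exact hmono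
      have hle2 : 1 + (t * M + t ^ 2 * K) ≤ Real.exp (t * M + t ^ 2 * K) := by
        have := Real.add_one_le_exp (t * M + t ^ 2 * K)
        linarith
      linarith
    -- Chernoff bound
    have hSfun : (fun ω => ∑ i ∈ Finset.range n, X i ω) = ∑ i ∈ Finset.range n, X i := by
      ext ω; simp [Finset.sum_apply]
    have hmgfS : mgf (fun ω => ∑ i ∈ Finset.range n, X i ω) P t =
        ∏ i ∈ Finset.range n, mgf (X i) P t := by
      rw [hSfun]
      exact hXindep.mgf_sum hXmeas (Finset.range n)
    have hprod : ∏ i ∈ Finset.range n, mgf (X i) P t ≤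
        Real.exp (t * M + t ^ 2 * K) ^ n := by
      calc ∏ i ∈ Finset.range n, mgf (X i) P t
          ≤ ∏ _i ∈ Finset.range n, Real.exp (t * M + t ^ 2 * K) :=
        Finset.prod_le_prod (fun i _ => mgf_nonneg) (fun i _ => hmgfi i)
      _ = Real.exp (t * M + t ^ 2 * K) ^ n := by
          rw [Finset.prod_const, Finset.card_range]
    have hcher := measure_ge_le_exp_mul_mgf (μ := P)
      (X := fun ω => ∑ i ∈ Finset.range n, X i ω) (f * n) ht0.le hint
    have he1 : t * (n:ℝ) = c / 2 * Real.sqrt n := by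
      rw [ht, div_mul_eq_mul_div, mul_div_assoc, Real.div_sqrt]
    have he2 : (n:ℝ) * t ^ 2 = (c/2) ^ 2 := by
      rw [ht, div_pow, Real.sq_sqrt hn0.le, mul_comm, div_mul_cancel₀ _ hn0.ne']
    have hfinal : Real.exp (-t * (f * n)) * Real.exp (t * M + t ^ 2 * K) ^ n =
        Real.exp ((c/2) ^ 2 * K) * Real.exp (-h0 * Real.sqrt n) := by
      rw [← Real.exp_nat_mul, ← Real.exp_add, ← Real.exp_add]
      congr 1
      have hexpand : -t * (f * n) + (n:ℝ) * (t * M + t ^ 2 * K) =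
          -(t * n) * f + (t * n) * M + ((n:ℝ) * t ^ 2) * K := by ring
      rw [hexpand, he1, he2, hh0]
      ring
    have hpart2 : P {ω | f * n ≤ ∑ i ∈ Finset.range n, X i ω} ≤
        ENNReal.ofReal (Real.exp ((c/2) ^ 2 * K) * Real.exp (-h0 * Real.sqrt n)) := by
      have hne : P {ω | f * n ≤ ∑ i ∈ Finset.range n, X i ω} ≠ ⊤ := measure_ne_top _ _
      rw [← ENNReal.ofReal_toReal hne]
      apply ENNReal.ofReal_le_ofReal
      calc (P {ω | f * n ≤ ∑ i ∈ Finset.range n, X i ω}).toReal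
          ≤ Real.exp (-t * (f * n)) *
            mgf (fun ω => ∑ i ∈ Finset.range n, X i ω) P t := hcher
      _ ≤ Real.exp (-t * (f * n)) * Real.exp (t * M + t ^ 2 * K) ^ n := by
          rw [hmgfS]
          exact mul_le_mul_of_nonneg_left hprod (Real.exp_nonneg _)
      _ = Real.exp ((c/2) ^ 2 * K) * Real.exp (-h0 * Real.sqrt n) := hfinal
    calc P {ω | f ≤ (∑ i ∈ Finset.range n, R i ω) / n}
        ≤ P ((⋃ i ∈ Finset.range n, {ω | (n:ℝ) < R i ω}) ∪
          {ω | f * n ≤ ∑ i ∈ Finset.range n, X i ω}) := measure_mono hincl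
    _ ≤ P (⋃ i ∈ Finset.range n, {ω | (n:ℝ) < R i ω}) +
        P {ω | f * n ≤ ∑ i ∈ Finset.range n, X i ω} := measure_union_le _ _
    _ ≤ ENNReal.ofReal (A * n * Real.exp (-c * Real.sqrt n)) +
        ENNReal.ofReal (Real.exp ((c/2) ^ 2 * K) * Real.exp (-h0 * Real.sqrt n)) :=
        add_le_add hpart1 hpart2
    _ = ENNReal.ofReal (A * n * Real.exp (-c * Real.sqrt n) +
        Real.exp ((c/2) ^ 2 * K) * Real.exp (-h0 * Real.sqrt n)) := by
        rw [← ENNReal.ofReal_add (by positivity) (by positivity)]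
  -- the tail estimate : the bound is eventually below exp(-h √n)
  have hδ1 : 0 < c - h := by linarith
  have hδ2 : 0 < h0 - h := by linarith
  have hcomp := ldp_aux_sqrt_tendsto
  have htend1 : Tendsto (fun n : ℕ => A * n * Real.exp (-(c - h) * Real.sqrt n))
      atTop (𝓝 0) := by
    have base : Tendsto (fun v : ℝ => v ^ 2 * Real.exp (-v)) atTop (𝓝 0) :=
      Real.tendsto_pow_mul_exp_neg_atTop_nhds_zero 2
    have hscale : Tendsto (fun u : ℝ => (c - h) * u) atTop atTop :=
      Tendsto.const_mul_atTop hδ1 tendsto_id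
    have comp1 := base.comp hscale
    have comp2 := (comp1.const_mul (A / (c - h) ^ 2)).comp hcomp
    rw [mul_zero] at comp2
    refine comp2.congr fun n => ?_
    simp only [Function.comp_apply]
    have hsq : Real.sqrt n ^ 2 = (n:ℝ) := Real.sq_sqrt (Nat.cast_nonneg n)
    have hmp : ((c - h) * Real.sqrt n) ^ 2 = (c - h) ^ 2 * (n:ℝ) := by
      rw [mul_pow, hsq]
    rw [hmp]
    rw [neg_mul]
    field_simp
  have htend2 : Tendsto (fun n : ℕ =>
      Real.exp ((c/2) ^ 2 * K) * Real.exp (-(h0 - h) * Real.sqrt n)) atTop (𝓝 0) := by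
    have hneg : Tendsto (fun n : ℕ => -((h0 - h) * Real.sqrt n)) atTop atBot :=
      tendsto_neg_atTop_atBot.comp ((Tendsto.const_mul_atTop hδ2 tendsto_id).comp hcomp)
    have hexp0 : Tendsto (fun n : ℕ => Real.exp (-((h0 - h) * Real.sqrt n))) atTop (𝓝 0) :=
      Real.tendsto_exp_atBot.comp hneg
    have := hexp0.const_mul (Real.exp ((c/2) ^ 2 * K))
    rw [mul_zero] at this
    refine this.congr fun n => ?_
    rw [neg_mul]
  have hFtend : Tendsto (fun n : ℕ => A * n * Real.exp (-(c - h) * Real.sqrt n) +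
      Real.exp ((c/2) ^ 2 * K) * Real.exp (-(h0 - h) * Real.sqrt n)) atTop (𝓝 0) := by
    have := htend1.add htend2
    rwa [add_zero] at this
  have hev : ∀ᶠ n : ℕ in atTop, A * n * Real.exp (-(c - h) * Real.sqrt n) +
      Real.exp ((c/2) ^ 2 * K) * Real.exp (-(h0 - h) * Real.sqrt n) < 1 :=
    hFtend.eventually_lt_const one_pos
  rw [eventually_atTop] at hev
  obtain ⟨N0, hN0⟩ := hev
  refine ⟨max N0 1, fun n hn => ?_⟩
  have hn1 : 1 ≤ n := le_trans (le_max_right _ _) hn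
  have hnN : N0 ≤ n := le_trans (le_max_left _ _) hn
  refine le_trans (key n hn1) ?_
  apply ENNReal.ofReal_le_ofReal
  have hFn := hN0 n hnN
  have e1 : Real.exp (-h * Real.sqrt n) * Real.exp (-(c - h) * Real.sqrt n) =
      Real.exp (-c * Real.sqrt n) := by
    rw [← Real.exp_add]; congr 1; ring
  have e2 : Real.exp (-h * Real.sqrt n) * Real.exp (-(h0 - h) * Real.sqrt n) =
      Real.exp (-h0 * Real.sqrt n) := by
    rw [← Real.exp_add]; congr 1; ring
  have hsplit : A * n * Real.exp (-c * Real.sqrt n) +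
      Real.exp ((c/2) ^ 2 * K) * Real.exp (-h0 * Real.sqrt n) =
      Real.exp (-h * Real.sqrt n) * (A * n * Real.exp (-(c - h) * Real.sqrt n) +
        Real.exp ((c/2) ^ 2 * K) * Real.exp (-(h0 - h) * Real.sqrt n)) := by
    rw [mul_add]
    congr 1
    · rw [show Real.exp (-h * Real.sqrt n) * (A * n * Real.exp (-(c - h) * Real.sqrt n)) =
        A * n * (Real.exp (-h * Real.sqrt n) * Real.exp (-(c - h) * Real.sqrt n)) from by ring,
        e1]
    · rw [show Real.exp (-h * Real.sqrt n) *
        (Real.exp ((c/2) ^ 2 * K) * Real.exp (-(h0 - h) * Real.sqrt n)) =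
        Real.exp ((c/2) ^ 2 * K) *
          (Real.exp (-h * Real.sqrt n) * Real.exp (-(h0 - h) * Real.sqrt n)) from by ring,
        e2]
  rw [hsplit]
  calc Real.exp (-h * Real.sqrt n) * (A * n * Real.exp (-(c - h) * Real.sqrt n) +
      Real.exp ((c/2) ^ 2 * K) * Real.exp (-(h0 - h) * Real.sqrt n))
      ≤ Real.exp (-h * Real.sqrt n) * 1 :=
        mul_le_mul_of_nonneg_left hFn.le (Real.exp_nonneg _)
  _ = Real.exp (-h * Real.sqrt n) := mul_one _
end

section
/- Let (a_k)_{k≥1} and (c_k)_{k≥1} be sequences of nonnegative reals with ∑_{k≥1} a_k < 1, c_1 ≤ a_1, and c_m ≤ a_m + ∑_{k=1}^{m-1} a_{m-k} c_k for every m ≥ 2. If 𝒜(t) := ∑_{k≥1} a_k e^{tk} is finite for some t₀ > 0, then 𝒜(t) < 1 for all sufficiently small t > 0, and for all such t, 𝒞(t) := ∑_{k≥1} c_k e^{tk} ≤ 𝒜(t)/(1 - 𝒜(t)). -/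
open Finset Real


private lemma sum_Icc_one_eq_range (f : ℕ → ℝ) (n : ℕ) :
    ∑ i ∈ Finset.Icc 1 n, f i = ∑ j ∈ Finset.range n, f (j + 1) := by
  rw [show Finset.Icc 1 n = Finset.Ico 1 (n + 1) from (Finset.Ico_add_one_right_eq_Icc 1 n).symm,
    Finset.sum_Ico_eq_sum_range]
  simp only [Nat.add_sub_cancel]
  exact Finset.sum_congr rfl fun j _ => by rw [add_comm]

private lemma renewal_partial_bound (a c : ℕ → ℝ)
    (ha : ∀ k, 0 ≤ a k) (hc : ∀ k, 0 ≤ c k)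
    (hrec1 : ∀ m : ℕ, 1 ≤ m →
      c m ≤ a m + ∑ k ∈ Finset.Icc 1 (m - 1), a (m - k) * c k)
    (t : ℝ)
    (hAt : Summable (fun k : ℕ => a (k + 1) * Real.exp (t * (k + 1))))
    (hA1 : (∑' k : ℕ, a (k + 1) * Real.exp (t * (k + 1))) < 1) :
    ∀ m : ℕ, ∑ i ∈ Finset.Icc 1 m, c i * Real.exp (t * i) ≤
      (∑' k : ℕ, a (k + 1) * Real.exp (t * (k + 1))) /
        (1 - ∑' k : ℕ, a (k + 1) * Real.exp (t * (k + 1))) := by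
  set A : ℝ := ∑' k : ℕ, a (k + 1) * Real.exp (t * (k + 1)) with hA_def
  have hAnn : 0 ≤ A := tsum_nonneg fun k => mul_nonneg (ha _) (Real.exp_pos _).le
  have h1A : 0 < 1 - A := by linarith
  intro m
  set S : ℝ := ∑ i ∈ Finset.Icc 1 m, c i * Real.exp (t * i) with hS_def
  have hSnn : 0 ≤ S := Finset.sum_nonneg fun i _ => mul_nonneg (hc _) (Real.exp_pos _).le
  -- termwise bound
  have hterm : ∀ i ∈ Finset.Icc 1 m, c i * Real.exp (t * i) ≤
      a i * Real.exp (t * i) +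
      ∑ k ∈ Finset.Icc 1 (i - 1),
        (a (i - k) * Real.exp (t * (i - k : ℕ))) * (c k * Real.exp (t * k)) := by
    intro i hi
    rw [Finset.mem_Icc] at hi
    have h := hrec1 i hi.1
    have hexp : 0 ≤ Real.exp (t * i) := (Real.exp_pos _).le
    calc c i * Real.exp (t * i) ≤
        (a i + ∑ k ∈ Finset.Icc 1 (i - 1), a (i - k) * c k) * Real.exp (t * i) :=
          mul_le_mul_of_nonneg_right h hexp
      _ = _ := by
          rw [add_mul, Finset.sum_mul]
          congr 1
          refine Finset.sum_congr rfl fun k hk => ?_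
          rw [Finset.mem_Icc] at hk
          have hki : k ≤ i := le_trans hk.2 (Nat.sub_le _ _)
          have : ((i - k : ℕ) : ℝ) = (i : ℝ) - (k : ℝ) := by
            push_cast [Nat.cast_sub hki]; ring
          rw [this]
          rw [show t * ((i : ℝ) - k) = t * i - t * k by ring, Real.exp_sub]
          field_simp
  have hstep : S ≤ A + A * S := by
    have h1 : S ≤ ∑ i ∈ Finset.Icc 1 m, (a i * Real.exp (t * i) +
        ∑ k ∈ Finset.Icc 1 (i - 1),
          (a (i - k) * Real.exp (t * (i - k : ℕ))) * (c k * Real.exp (t * k))) :=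
      Finset.sum_le_sum hterm
    rw [Finset.sum_add_distrib] at h1
    have h2 : ∑ i ∈ Finset.Icc 1 m, a i * Real.exp (t * i) ≤ A := by
      have : ∑ i ∈ Finset.Icc 1 m, a i * Real.exp (t * i) =
          ∑ j ∈ Finset.range m, a (j + 1) * Real.exp (t * (j + 1)) := by
        rw [sum_Icc_one_eq_range (fun i => a i * Real.exp (t * i)) m]
        refine Finset.sum_congr rfl fun j _ => ?_
        push_cast; ring_nf
      rw [this]
      exact Summable.sum_le_tsum _ (fun k _ => mul_nonneg (ha _) (Real.exp_pos _).le) hAt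
    -- swap the double sum
    have h3 : ∑ i ∈ Finset.Icc 1 m, ∑ k ∈ Finset.Icc 1 (i - 1),
        (a (i - k) * Real.exp (t * (i - k : ℕ))) * (c k * Real.exp (t * k)) ≤ A * S := by
      have hIccIco : ∀ i : ℕ, Finset.Icc 1 (i - 1) = Finset.Ico 1 i := by
        intro i; ext x; simp [Finset.mem_Icc, Finset.mem_Ico]; omega
      have hIcc : Finset.Icc 1 m = Finset.Ico 1 (m + 1) := by
        ext x; simp [Finset.mem_Icc, Finset.mem_Ico]
      have hswap : ∑ i ∈ Finset.Icc 1 m, ∑ k ∈ Finset.Icc 1 (i - 1),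
          (a (i - k) * Real.exp (t * (i - k : ℕ))) * (c k * Real.exp (t * k)) =
          ∑ k ∈ Finset.Ico 1 (m + 1), ∑ i ∈ Finset.Ico (k + 1) (m + 1),
          (a (i - k) * Real.exp (t * (i - k : ℕ))) * (c k * Real.exp (t * k)) := by
        simp_rw [hIccIco, hIcc]
        exact (Finset.sum_Ico_Ico_comm' 1 (m + 1)
          (fun k i => (a (i - k) * Real.exp (t * (i - k : ℕ))) * (c k * Real.exp (t * k)))).symm
      rw [hswap, hS_def, hIcc, Finset.mul_sum]
      refine Finset.sum_le_sum fun k hk => ?_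
      have hinner : ∑ i ∈ Finset.Ico (k + 1) (m + 1),
          (a (i - k) * Real.exp (t * (i - k : ℕ))) * (c k * Real.exp (t * k)) =
          (∑ j ∈ Finset.range (m - k), a (j + 1) * Real.exp (t * (j + 1))) *
            (c k * Real.exp (t * k)) := by
        rw [Finset.sum_Ico_eq_sum_range, Finset.sum_mul]
        have : m + 1 - (k + 1) = m - k := by omega
        rw [this]
        refine Finset.sum_congr rfl fun j _ => ?_
        have : k + 1 + j - k = j + 1 := by omega
        rw [this]
        push_cast; ring_nf
      rw [hinner]
      have hckek : 0 ≤ c k * Real.exp (t * k) := mul_nonneg (hc _) (Real.exp_pos _).le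
      refine mul_le_mul_of_nonneg_right ?_ hckek
      exact Summable.sum_le_tsum _ (fun j _ => mul_nonneg (ha _) (Real.exp_pos _).le) hAt
    calc S ≤ _ := h1
      _ ≤ A + A * S := add_le_add h2 h3
  rw [le_div_iff₀ h1A]
  nlinarith

/-- Renewal-type inequality, exponential weights: if `∑ a_k < 1`, `c_1 ≤ a_1` and
`c_m ≤ a_m + ∑_{k=1}^{m-1} a_{m-k} c_k`, and `𝒜(t₀) = ∑ a_k e^{t₀ k} < ∞` for some
`t₀ > 0`, then for all sufficiently small `t > 0`, `𝒜(t) < 1` and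
`𝒞(t) = ∑ c_k e^{tk} ≤ 𝒜(t)/(1 - 𝒜(t))`. -/
theorem renewal_exponential_bound (a c : ℕ → ℝ)
    (ha : ∀ k, 0 ≤ a k) (hcpos : ∀ k, 0 ≤ c k)
    (hsum : Summable (fun k : ℕ => a (k + 1)))
    (hlt1 : (∑' k : ℕ, a (k + 1)) < 1)
    (hc1 : c 1 ≤ a 1)
    (hrec : ∀ m : ℕ, 2 ≤ m →
      c m ≤ a m + ∑ k ∈ Finset.Icc 1 (m - 1), a (m - k) * c k)
    (t₀ : ℝ) (ht₀ : 0 < t₀)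
    (hA : Summable (fun k : ℕ => a (k + 1) * Real.exp (t₀ * (k + 1)))) :
    ∃ t₁ : ℝ, 0 < t₁ ∧ ∀ t : ℝ, 0 < t → t ≤ t₁ →
      Summable (fun k : ℕ => a (k + 1) * Real.exp (t * (k + 1))) ∧
      (∑' k : ℕ, a (k + 1) * Real.exp (t * (k + 1))) < 1 ∧
      Summable (fun k : ℕ => c (k + 1) * Real.exp (t * (k + 1))) ∧
      (∑' k : ℕ, c (k + 1) * Real.exp (t * (k + 1))) ≤
        (∑' k : ℕ, a (k + 1) * Real.exp (t * (k + 1))) /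
          (1 - ∑' k : ℕ, a (k + 1) * Real.exp (t * (k + 1))) := by
  -- summability for all 0 < t ≤ t₀
  have hsummA : ∀ t : ℝ, 0 ≤ t → t ≤ t₀ →
      Summable (fun k : ℕ => a (k + 1) * Real.exp (t * (k + 1))) := by
    intro t ht ht'
    refine hA.of_nonneg_of_le (fun k => mul_nonneg (ha _) (Real.exp_pos _).le) fun k => ?_
    refine mul_le_mul_of_nonneg_left (Real.exp_le_exp.2 ?_) (ha _)
    have : (0 : ℝ) ≤ (k : ℝ) + 1 := by positivity
    nlinarith
  -- limit of 𝒜(t) as t → 0⁺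
  have hlim : Filter.Tendsto (fun t : ℝ => ∑' k : ℕ, a (k + 1) * Real.exp (t * (k + 1)))
      (nhdsWithin 0 (Set.Ioi 0)) (nhds (∑' k : ℕ, a (k + 1))) := by
    have h0 : (∑' k : ℕ, a (k + 1)) = ∑' k : ℕ, a (k + 1) * Real.exp ((0 : ℝ) * (k + 1)) := by
      simp
    rw [h0]
    refine tendsto_tsum_of_dominated_convergence
      (bound := fun k : ℕ => a (k + 1) * Real.exp (t₀ * (k + 1))) hA (fun k => ?_) ?_
    · exact (Filter.Tendsto.mono_left
        ((continuous_const.mul ((continuous_id.mul continuous_const).rexp)).tendsto 0)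
        nhdsWithin_le_nhds)
    · filter_upwards [Ioc_mem_nhdsGT_of_mem (Set.left_mem_Ico.2 ht₀)] with t ht k
      rw [Real.norm_of_nonneg (mul_nonneg (ha _) (Real.exp_pos _).le)]
      refine mul_le_mul_of_nonneg_left (Real.exp_le_exp.2 ?_) (ha _)
      have : (0 : ℝ) ≤ (k : ℝ) + 1 := by positivity
      nlinarith [ht.2]
  -- find t₁
  have hev : ∀ᶠ t in nhdsWithin 0 (Set.Ioi 0),
      (∑' k : ℕ, a (k + 1) * Real.exp (t * (k + 1))) < 1 :=
    hlim.eventually_lt_const hlt1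
  have hev2 : ∀ᶠ t in nhdsWithin 0 (Set.Ioi 0), t ∈ Set.Ioc (0 : ℝ) t₀ :=
    Ioc_mem_nhdsGT_of_mem (Set.left_mem_Ico.2 ht₀)
  obtain ⟨t₁, ht₁lt, ht₁mem⟩ := (hev.and hev2).exists
  refine ⟨t₁, ht₁mem.1, fun t ht ht' => ?_⟩
  have htt₀ : t ≤ t₀ := le_trans ht' ht₁mem.2
  have hSt : Summable (fun k : ℕ => a (k + 1) * Real.exp (t * (k + 1))) :=
    hsummA t ht.le htt₀
  have hSt₁ : Summable (fun k : ℕ => a (k + 1) * Real.exp (t₁ * (k + 1))) :=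
    hsummA t₁ ht₁mem.1.le ht₁mem.2
  have hmono : (∑' k : ℕ, a (k + 1) * Real.exp (t * (k + 1))) ≤
      ∑' k : ℕ, a (k + 1) * Real.exp (t₁ * (k + 1)) := by
    refine Summable.tsum_le_tsum (fun k => ?_) hSt hSt₁
    refine mul_le_mul_of_nonneg_left (Real.exp_le_exp.2 ?_) (ha _)
    have : (0 : ℝ) ≤ (k : ℝ) + 1 := by positivity
    nlinarith
  have hAlt1 : (∑' k : ℕ, a (k + 1) * Real.exp (t * (k + 1))) < 1 :=
    lt_of_le_of_lt hmono ht₁lt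
  refine ⟨hSt, hAlt1, ?_, ?_⟩
  -- combine hc1 and hrec
  all_goals {
    have hrec1 : ∀ m : ℕ, 1 ≤ m →
        c m ≤ a m + ∑ k ∈ Finset.Icc 1 (m - 1), a (m - k) * c k := by
      intro m hm
      rcases eq_or_lt_of_le hm with h | h
      · simp [← h, hc1]
      · exact hrec m h
    have hpart := renewal_partial_bound a c ha hcpos hrec1 t hSt hAlt1
    have hrange : ∀ n : ℕ, ∑ i ∈ Finset.range n, c (i + 1) * Real.exp (t * (i + 1)) =
        ∑ i ∈ Finset.Icc 1 n, c i * Real.exp (t * i) := by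
      intro n
      rw [sum_Icc_one_eq_range (fun i => c i * Real.exp (t * i)) n]
      refine Finset.sum_congr rfl fun j _ => ?_
      push_cast; ring_nf
    have hb : ∀ n : ℕ, ∑ i ∈ Finset.range n, c (i + 1) * Real.exp (t * (i + 1)) ≤
        (∑' k : ℕ, a (k + 1) * Real.exp (t * (k + 1))) /
          (1 - ∑' k : ℕ, a (k + 1) * Real.exp (t * (k + 1))) := by
      intro n; rw [hrange]; exact hpart n
    first
    | exact summable_of_sum_range_le
        (fun k => mul_nonneg (hcpos _) (Real.exp_pos _).le) hb
    | exact Real.tsum_le_of_sum_range_le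
        (fun k => mul_nonneg (hcpos _) (Real.exp_pos _).le) hb
  }
end

section
/- Let (a_k), (c_k) be nonnegative sequences with ∑a_k < 1, c_1 ≤ a_1, and c_m ≤ a_m + ∑_{k=1}^{m-1} a_{m-k} c_k for m ≥ 2. Let q ≥ 1 and suppose A_q := ∑_{k≥1} a_k k^q < ∞. Then C_k := ∑_{j≥1} c_j j^k < ∞ for all 1 ≤ k ≤ q, and C_q ≤ (1-A_0)^{-1} (A_q + ∑_{k=1}^{q} binom(q,k) C_{q-k} A_k), where A_0 := ∑_{k≥1} a_k and C_0 := ∑_{k≥1} c_k. -/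
open Finset

private lemma shift_sum (f : ℕ → ℝ) (N : ℕ) :
    ∑ m ∈ Icc 1 N, f m = ∑ j ∈ range N, f (j + 1) := by
  induction N with
  | zero => simp
  | succ n ih => rw [Finset.sum_Icc_succ_top (by omega), ih, Finset.sum_range_succ]

private lemma shift_sum2 (f : ℕ → ℝ) (k N : ℕ) :
    ∑ m ∈ Icc (k + 1) N, f (m - k) = ∑ t ∈ Icc 1 (N - k), f t := by
  refine Finset.sum_nbij' (i := fun m => m - k) (j := fun t => t + k) ?_ ?_ ?_ ?_ ?_ <;>
    intro x hx <;> simp only [Finset.mem_Icc] at * <;> omega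

private lemma key_ineq (a c : ℕ → ℝ) (ha : ∀ k, 0 ≤ a k) (hc : ∀ k, 0 ≤ c k)
    (hc1 : c 1 ≤ a 1)
    (hrec : ∀ m : ℕ, 2 ≤ m → c m ≤ a m + ∑ k ∈ Icc 1 (m - 1), a (m - k) * c k)
    (r : ℕ) (hA : ∀ i, i ≤ r → Summable (fun k : ℕ => a (k + 1) * ((k : ℝ) + 1) ^ i))
    (N : ℕ) :
    ∑ m ∈ Icc 1 N, c m * (m : ℝ) ^ r ≤
      (∑' k : ℕ, a (k + 1) * ((k : ℝ) + 1) ^ r) +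
        ∑ i ∈ range (r + 1), (r.choose i : ℝ) *
          (∑' k : ℕ, a (k + 1) * ((k : ℝ) + 1) ^ i) *
          (∑ m ∈ Icc 1 N, c m * (m : ℝ) ^ (r - i)) := by
  have hb : ∀ m, 1 ≤ m → c m ≤ a m + ∑ k ∈ Icc 1 (m - 1), a (m - k) * c k := by
    intro m hm
    rcases eq_or_lt_of_le hm with h | h
    · rw [← h]; simpa using hc1
    · exact hrec m h
  have step1 : ∑ m ∈ Icc 1 N, c m * (m : ℝ) ^ r ≤
      ∑ m ∈ Icc 1 N, a m * (m : ℝ) ^ r +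
      ∑ m ∈ Icc 1 N, (∑ k ∈ Icc 1 (m - 1), a (m - k) * c k) * (m : ℝ) ^ r := by
    rw [← Finset.sum_add_distrib]
    refine Finset.sum_le_sum fun m hm => ?_
    have h1 : 1 ≤ m := (Finset.mem_Icc.mp hm).1
    have h2 := mul_le_mul_of_nonneg_right (hb m h1) (by positivity : (0:ℝ) ≤ (m:ℝ) ^ r)
    rw [add_mul] at h2
    exact h2
  have step2 : ∑ m ∈ Icc 1 N, a m * (m : ℝ) ^ r ≤
      ∑' k : ℕ, a (k + 1) * ((k : ℝ) + 1) ^ r := by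
    rw [shift_sum]
    have he : ∀ j ∈ range N, a (j + 1) * ((j + 1 : ℕ) : ℝ) ^ r = a (j + 1) * ((j : ℝ) + 1) ^ r := by
      intro j _; push_cast; ring
    rw [Finset.sum_congr rfl he]
    exact Summable.sum_le_tsum _ (fun k _ => mul_nonneg (ha _) (by positivity)) (hA r le_rfl)
  have step3 : ∑ m ∈ Icc 1 N, (∑ k ∈ Icc 1 (m - 1), a (m - k) * c k) * (m : ℝ) ^ r ≤
      ∑ i ∈ range (r + 1), (r.choose i : ℝ) *
        (∑' k : ℕ, a (k + 1) * ((k : ℝ) + 1) ^ i) *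
        (∑ m ∈ Icc 1 N, c m * (m : ℝ) ^ (r - i)) := by
    have expand : ∀ m ∈ Icc 1 N,
        (∑ k ∈ Icc 1 (m - 1), a (m - k) * c k) * (m : ℝ) ^ r =
        ∑ i ∈ range (r + 1), ∑ k ∈ Icc 1 (m - 1),
          (r.choose i : ℝ) * (a (m - k) * ((m - k : ℕ) : ℝ) ^ i) * (c k * (k : ℝ) ^ (r - i)) := by
      intro m _
      rw [Finset.sum_mul, Finset.sum_comm]
      refine Finset.sum_congr rfl fun k hk => ?_
      have hkm : k < m := by have := Finset.mem_Icc.mp hk; omega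
      have hcast : (m : ℝ) = ((m - k : ℕ) : ℝ) + (k : ℝ) := by
        rw [Nat.cast_sub hkm.le]; ring
      rw [hcast, add_pow, Finset.mul_sum]
      exact Finset.sum_congr rfl fun i _ => by ring
    rw [Finset.sum_congr rfl expand, Finset.sum_comm]
    refine Finset.sum_le_sum fun i hi => ?_
    have hir : i ≤ r := Nat.lt_succ_iff.mp (Finset.mem_range.mp hi)
    have hfilt : ∀ m ∈ Icc 1 N, Icc 1 (m - 1) = (Icc 1 N).filter (fun k => k + 1 ≤ m) := by
      intro m hm
      have := Finset.mem_Icc.mp hm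
      ext k
      simp only [Finset.mem_Icc, Finset.mem_filter]
      omega
    calc ∑ m ∈ Icc 1 N, ∑ k ∈ Icc 1 (m - 1),
          (r.choose i : ℝ) * (a (m - k) * ((m - k : ℕ) : ℝ) ^ i) * (c k * (k : ℝ) ^ (r - i))
        = ∑ k ∈ Icc 1 N, ∑ m ∈ Icc (k + 1) N,
          (r.choose i : ℝ) * (a (m - k) * ((m - k : ℕ) : ℝ) ^ i) * (c k * (k : ℝ) ^ (r - i)) := by
          rw [Finset.sum_congr rfl fun m hm => by rw [hfilt m hm, Finset.sum_filter]]
          rw [Finset.sum_comm]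
          refine Finset.sum_congr rfl fun k _ => ?_
          rw [← Finset.sum_filter]
          congr 1
          ext m
          simp only [Finset.mem_Icc, Finset.mem_filter]
          omega
      _ ≤ ∑ k ∈ Icc 1 N, (r.choose i : ℝ) *
            (∑' t : ℕ, a (t + 1) * ((t : ℝ) + 1) ^ i) * (c k * (k : ℝ) ^ (r - i)) := by
          refine Finset.sum_le_sum fun k _ => ?_
          have inner : ∑ m ∈ Icc (k + 1) N, a (m - k) * ((m - k : ℕ) : ℝ) ^ i ≤
              ∑' t : ℕ, a (t + 1) * ((t : ℝ) + 1) ^ i := by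
            rw [shift_sum2 (fun t => a t * (t : ℝ) ^ i) k N,
              shift_sum (fun t => a t * (t : ℝ) ^ i) (N - k)]
            have he : ∀ j ∈ range (N - k),
                a (j + 1) * ((j + 1 : ℕ) : ℝ) ^ i = a (j + 1) * ((j : ℝ) + 1) ^ i := by
              intro j _; push_cast; ring
            rw [Finset.sum_congr rfl he]
            exact Summable.sum_le_tsum _ (fun t _ => mul_nonneg (ha _) (by positivity)) (hA i hir)
          calc ∑ m ∈ Icc (k + 1) N,
                (r.choose i : ℝ) * (a (m - k) * ((m - k : ℕ) : ℝ) ^ i) * (c k * (k : ℝ) ^ (r - i))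
              = (r.choose i : ℝ) * (∑ m ∈ Icc (k + 1) N, a (m - k) * ((m - k : ℕ) : ℝ) ^ i) *
                  (c k * (k : ℝ) ^ (r - i)) := by
                rw [Finset.mul_sum, Finset.sum_mul]
            _ ≤ _ := by
                have h1 : (0:ℝ) ≤ c k * (k : ℝ) ^ (r - i) :=
                  mul_nonneg (hc _) (by positivity)
                have h2 : (0:ℝ) ≤ (r.choose i : ℝ) := Nat.cast_nonneg _
                exact mul_le_mul_of_nonneg_right
                  (mul_le_mul_of_nonneg_left inner h2) h1
      _ = (r.choose i : ℝ) * (∑' t : ℕ, a (t + 1) * ((t : ℝ) + 1) ^ i) *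
            (∑ m ∈ Icc 1 N, c m * (m : ℝ) ^ (r - i)) := by
          rw [Finset.mul_sum]
  linarith

/-- Renewal-type inequality, polynomial moments: if `∑ a_k < 1`, `c_1 ≤ a_1`,
`c_m ≤ a_m + ∑_{k=1}^{m-1} a_{m-k} c_k`, and `A_q = ∑ a_k k^q < ∞` for an integer
`q ≥ 1`, then `C_k = ∑ c_j j^k < ∞` for `1 ≤ k ≤ q` and
`C_q ≤ (1-A_0)⁻¹ (A_q + ∑_{k=1}^q binom(q,k) C_{q-k} A_k)`. -/
theorem renewal_polynomial_bound (a c : ℕ → ℝ) (q : ℕ) (hq : 1 ≤ q)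
    (ha : ∀ k, 0 ≤ a k) (hcpos : ∀ k, 0 ≤ c k)
    (hsum : Summable (fun k : ℕ => a (k + 1)))
    (hlt1 : (∑' k : ℕ, a (k + 1)) < 1)
    (hc1 : c 1 ≤ a 1)
    (hrec : ∀ m : ℕ, 2 ≤ m →
      c m ≤ a m + ∑ k ∈ Finset.Icc 1 (m - 1), a (m - k) * c k)
    (hAq : Summable (fun k : ℕ => a (k + 1) * ((k : ℝ) + 1) ^ q)) :
    (∀ k : ℕ, 1 ≤ k → k ≤ q →
      Summable (fun j : ℕ => c (j + 1) * ((j : ℝ) + 1) ^ k)) ∧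
    (∑' j : ℕ, c (j + 1) * ((j : ℝ) + 1) ^ q) ≤
      (1 - ∑' k : ℕ, a (k + 1))⁻¹ *
        ((∑' k : ℕ, a (k + 1) * ((k : ℝ) + 1) ^ q) +
          ∑ k ∈ Finset.Icc 1 q, (q.choose k : ℝ) *
            (∑' j : ℕ, c (j + 1) * ((j : ℝ) + 1) ^ (q - k)) *
            (∑' j : ℕ, a (j + 1) * ((j : ℝ) + 1) ^ k)) := by
  set A0 : ℝ := ∑' k : ℕ, a (k + 1) with hA0def
  have hA0nn : 0 ≤ A0 := tsum_nonneg fun k => ha _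
  have h1A0 : 0 < 1 - A0 := by linarith
  have hA : ∀ i, i ≤ q → Summable (fun k : ℕ => a (k + 1) * ((k : ℝ) + 1) ^ i) := by
    intro i hi
    refine Summable.of_nonneg_of_le (fun k => mul_nonneg (ha _) (by positivity))
      (fun k => ?_) hAq
    refine mul_le_mul_of_nonneg_left ?_ (ha _)
    exact pow_le_pow_right₀ (le_add_of_nonneg_left (Nat.cast_nonneg k)) hi
  have hAnn : ∀ i : ℕ, 0 ≤ ∑' k : ℕ, a (k + 1) * ((k : ℝ) + 1) ^ i :=
    fun i => tsum_nonneg fun k => mul_nonneg (ha _) (by positivity)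
  have hSnn : ∀ r N : ℕ, 0 ≤ ∑ m ∈ Icc 1 N, c m * (m : ℝ) ^ r :=
    fun r N => Finset.sum_nonneg fun m _ => mul_nonneg (hcpos _) (by positivity)
  have hcast : ∀ (k N : ℕ), ∑ m ∈ Icc 1 N, c m * (m : ℝ) ^ k =
      ∑ j ∈ range N, c (j + 1) * ((j : ℝ) + 1) ^ k := by
    intro k N
    rw [shift_sum (fun m => c m * (m : ℝ) ^ k)]
    exact Finset.sum_congr rfl fun j _ => by push_cast; ring
  -- rearranged key inequality
  have key2 : ∀ r, r ≤ q → ∀ N, (1 - A0) * (∑ m ∈ Icc 1 N, c m * (m : ℝ) ^ r) ≤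
      (∑' k : ℕ, a (k + 1) * ((k : ℝ) + 1) ^ r) +
      ∑ i ∈ Icc 1 r, (r.choose i : ℝ) * (∑' k : ℕ, a (k + 1) * ((k : ℝ) + 1) ^ i) *
        (∑ m ∈ Icc 1 N, c m * (m : ℝ) ^ (r - i)) := by
    intro r hr N
    have h := key_ineq a c ha hcpos hc1 hrec r (fun i hi => hA i (hi.trans hr)) N
    have hsplit : ∑ i ∈ range (r + 1), (r.choose i : ℝ) *
          (∑' k : ℕ, a (k + 1) * ((k : ℝ) + 1) ^ i) *
          (∑ m ∈ Icc 1 N, c m * (m : ℝ) ^ (r - i))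
        = A0 * (∑ m ∈ Icc 1 N, c m * (m : ℝ) ^ r) +
          ∑ i ∈ Icc 1 r, (r.choose i : ℝ) * (∑' k : ℕ, a (k + 1) * ((k : ℝ) + 1) ^ i) *
            (∑ m ∈ Icc 1 N, c m * (m : ℝ) ^ (r - i)) := by
      rw [Finset.sum_range_succ', shift_sum (fun i => (r.choose i : ℝ) *
          (∑' k : ℕ, a (k + 1) * ((k : ℝ) + 1) ^ i) *
          (∑ m ∈ Icc 1 N, c m * (m : ℝ) ^ (r - i))) r]
      simp only [Nat.choose_zero_right, Nat.cast_one, pow_zero, mul_one, Nat.sub_zero, one_mul]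
      rw [add_comm, hA0def]
    linarith [h, hsplit.symm ▸ h]
  -- uniform boundedness of partial sums
  have hbound : ∀ r, r ≤ q → ∃ M, ∀ N, ∑ m ∈ Icc 1 N, c m * (m : ℝ) ^ r ≤ M := by
    intro r
    induction r using Nat.strong_induction_on with
    | _ r ih =>
      intro hr
      have hM : ∀ i, i ∈ Icc 1 r → ∃ M, ∀ N, ∑ m ∈ Icc 1 N, c m * (m : ℝ) ^ (r - i) ≤ M := by
        intro i hi
        have h := Finset.mem_Icc.mp hi
        exact ih (r - i) (by omega) (by omega)
      choose! M hMle using hM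
      refine ⟨(1 - A0)⁻¹ * ((∑' k : ℕ, a (k + 1) * ((k : ℝ) + 1) ^ r) +
        ∑ i ∈ Icc 1 r, (r.choose i : ℝ) * (∑' k : ℕ, a (k + 1) * ((k : ℝ) + 1) ^ i) * M i),
        fun N => ?_⟩
      rw [le_inv_mul_iff₀ h1A0]
      refine (key2 r hr N).trans (add_le_add_right (Finset.sum_le_sum fun i hi => ?_) _)
      exact mul_le_mul_of_nonneg_left (hMle i hi N)
        (mul_nonneg (Nat.cast_nonneg _) (hAnn i))
  -- summability
  have hCsum : ∀ k, k ≤ q → Summable (fun j : ℕ => c (j + 1) * ((j : ℝ) + 1) ^ k) := by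
    intro k hk
    obtain ⟨M, hM⟩ := hbound k hk
    refine summable_of_sum_range_le (c := M) (fun j => mul_nonneg (hcpos _) (by positivity))
      (fun n => ?_)
    rw [← hcast k n]
    exact hM n
  refine ⟨fun k h1 h2 => hCsum k h2, ?_⟩
  -- final bound
  have hfin : ∀ N, ∑ m ∈ Icc 1 N, c m * (m : ℝ) ^ q ≤
      (1 - A0)⁻¹ * ((∑' k : ℕ, a (k + 1) * ((k : ℝ) + 1) ^ q) +
        ∑ i ∈ Icc 1 q, (q.choose i : ℝ) *
          (∑' j : ℕ, c (j + 1) * ((j : ℝ) + 1) ^ (q - i)) *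
          (∑' j : ℕ, a (j + 1) * ((j : ℝ) + 1) ^ i)) := by
    intro N
    rw [le_inv_mul_iff₀ h1A0]
    refine (key2 q le_rfl N).trans (add_le_add_right (Finset.sum_le_sum fun i hi => ?_) _)
    have h := Finset.mem_Icc.mp hi
    have hle : ∑ m ∈ Icc 1 N, c m * (m : ℝ) ^ (q - i) ≤
        ∑' j : ℕ, c (j + 1) * ((j : ℝ) + 1) ^ (q - i) := by
      rw [hcast]
      exact Summable.sum_le_tsum _ (fun j _ => mul_nonneg (hcpos _) (by positivity))
        (hCsum (q - i) (by omega))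
    calc (q.choose i : ℝ) * (∑' k : ℕ, a (k + 1) * ((k : ℝ) + 1) ^ i) *
          (∑ m ∈ Icc 1 N, c m * (m : ℝ) ^ (q - i))
        ≤ (q.choose i : ℝ) * (∑' k : ℕ, a (k + 1) * ((k : ℝ) + 1) ^ i) *
          (∑' j : ℕ, c (j + 1) * ((j : ℝ) + 1) ^ (q - i)) :=
          mul_le_mul_of_nonneg_left hle (mul_nonneg (Nat.cast_nonneg _) (hAnn i))
      _ = _ := by ring
  refine Summable.tsum_le_of_sum_range_le (hCsum q le_rfl) fun n => ?_
  rw [← hcast q n]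
  exact hfin n
end

section
/- Let w = (F, r, A) be a configuration of particles (A a nonempty subset of ℤ × {1,…,a}, F : A → ℤ with F(x,i) ≤ r), and let each particle perform an independent continuous-time simple symmetric random walk (F_s(x,i))_{s≥0} with jump rate 2 started at F(x,i). Fix θ > 0 and γ > 0 and set g_γ(θ) := γθ − 2(cosh θ − 1). Then for all t ≥ 0, P( sup_{(x,i) ∈ A} sup_{0 ≤ s ≤ t} F_s(x,i) ≥ r + γt ) ≤ f_θ(w) · exp(−g_γ(θ)·t), where f_θ(w) := ∑_{(x,i) ∈ A} exp(θ(F(x,i) − r)). -/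
open MeasureTheory ProbabilityTheory

/-- `ζ` is a continuous-time simple symmetric random walk on ℤ with total jump rate 2
started at 0: it is realized as `ζ s ω = X (N s ω) ω` where `X` is a discrete-time
simple symmetric random walk and `N` an independent rate-2 Poisson process. -/
def IsSSRW {Ω : Type} [MeasurableSpace Ω] (P : Measure Ω)
    (ζ : ℝ → Ω → ℤ) : Prop :=
  ∃ (X : ℕ → Ω → ℤ) (N : ℝ → Ω → ℕ),
    (∀ n, Measurable (X n)) ∧ (∀ t, Measurable (N t)) ∧
    (∀ ω, X 0 ω = 0) ∧ (∀ ω, N 0 ω = 0) ∧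
    (∀ ω, Monotone fun t => N t ω) ∧
    iIndepFun (fun n ω => X (n + 1) ω - X n ω) P ∧
    (∀ n : ℕ,
      P {ω | X (n + 1) ω - X n ω = 1} = ENNReal.ofReal (1 / 2) ∧
      P {ω | X (n + 1) ω - X n ω = -1} = ENNReal.ofReal (1 / 2)) ∧
    (∀ s t : ℝ, 0 ≤ s → s ≤ t → ∀ k : ℕ,
      P {ω | N t ω - N s ω = k} =
        ENNReal.ofReal (Real.exp (-(2 * (t - s))) * (2 * (t - s)) ^ k /
          (Nat.factorial k))) ∧
    (∀ u : ℕ → ℝ, Monotone u → 0 ≤ u 0 →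
      iIndepFun
        (fun i ω => N (u (i + 1)) ω - N (u i) ω) P) ∧
    IndepFun (fun ω => (fun t : ℝ => N t ω)) (fun ω => (fun n : ℕ => X n ω)) P ∧
    (∀ s ω, ζ s ω = X (N s ω) ω)

section Helpers
variable {Ω : Type} [mΩ : MeasurableSpace Ω] (P : Measure Ω) [IsProbabilityMeasure P]

/-- Expectation of `exp (θ D)` for a `±1` fair increment. -/
lemma lintegral_exp_pm (D : Ω → ℤ) (hD : Measurable D)
    (h1 : P {ω | D ω = 1} = ENNReal.ofReal (1 / 2))
    (h2 : P {ω | D ω = -1} = ENNReal.ofReal (1 / 2)) (θ : ℝ) :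
    ∫⁻ ω, ENNReal.ofReal (Real.exp (θ * (D ω : ℝ))) ∂P
      = ENNReal.ofReal (Real.cosh θ) := by
  set A : Set Ω := {ω | D ω = 1} with hA
  set B : Set Ω := {ω | D ω = -1} with hB
  have hAmeas : MeasurableSet A := hD (measurableSet_singleton 1)
  have hBmeas : MeasurableSet B := hD (measurableSet_singleton (-1))
  have hdisj : Disjoint A B := by
    rw [Set.disjoint_left]; intro ω h1' h2'; simp only [hA, hB, Set.mem_setOf_eq] at h1' h2'
    omega
  have hunion : P (A ∪ B) = 1 := by
    rw [measure_union hdisj hBmeas, h1, h2, ← ENNReal.ofReal_add (by norm_num) (by norm_num)]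
    norm_num
  have hcompl : P ((A ∪ B)ᶜ) = 0 := by
    rw [measure_compl ((hAmeas.union hBmeas)) (measure_ne_top _ _), hunion, measure_univ,
      tsub_self]
  have hae : (fun ω => ENNReal.ofReal (Real.exp (θ * (D ω : ℝ))))
      =ᵐ[P] (fun ω => A.indicator (fun _ => ENNReal.ofReal (Real.exp θ)) ω
        + B.indicator (fun _ => ENNReal.ofReal (Real.exp (-θ))) ω) := by
    refine Filter.eventuallyEq_of_mem (by rw [mem_ae_iff]; exact hcompl) ?_
    intro ω hω
    rcases hω with hω | hω
    · have : D ω = 1 := hω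
      simp [Set.indicator_of_mem hω, Set.indicator_of_notMem (Set.disjoint_left.mp hdisj hω),
        this]
    · have : D ω = -1 := hω
      simp [Set.indicator_of_mem hω,
        Set.indicator_of_notMem (Set.disjoint_right.mp hdisj hω), this, mul_comm]
  rw [lintegral_congr_ae hae, lintegral_add_left (measurable_const.indicator hAmeas),
    lintegral_indicator_const hAmeas, lintegral_indicator_const hBmeas, h1, h2,
    ← ENNReal.ofReal_mul (Real.exp_nonneg _), ← ENNReal.ofReal_mul (Real.exp_nonneg _),
    ← ENNReal.ofReal_add (by positivity) (by positivity), Real.cosh_eq]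
  ring_nf

/-- Expectation of `exp (θ ∑_{i ∈ s} D i)` for iid fair `±1` increments `D`. -/
lemma lintegral_exp_sum (D : ℕ → Ω → ℤ) (hD : ∀ n, Measurable (D n))
    (hind : iIndepFun D P)
    (hpm : ∀ n : ℕ, P {ω | D n ω = 1} = ENNReal.ofReal (1 / 2) ∧
      P {ω | D n ω = -1} = ENNReal.ofReal (1 / 2))
    (θ : ℝ) (s : Finset ℕ) :
    ∫⁻ ω, ENNReal.ofReal (Real.exp (θ * ((∑ i ∈ s, D i ω : ℤ) : ℝ))) ∂P
      = ENNReal.ofReal (Real.cosh θ) ^ s.card := by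
  classical
  induction s using Finset.induction_on with
  | empty => simp [lintegral_one]
  | @insert a s ha ih =>
    have hfg : IndepFun (fun ω => ENNReal.ofReal (Real.exp (θ * (D a ω : ℝ))))
        (fun ω => ENNReal.ofReal (Real.exp (θ * ((∑ i ∈ s, D i ω : ℤ) : ℝ)))) P := by
      have hbase := hind.indepFun_finset {a} s (by simpa using ha) hD
      have hφ : Measurable (fun v : (({a} : Finset ℕ) → ℤ) =>
          ENNReal.ofReal (Real.exp (θ * (v ⟨a, Finset.mem_singleton_self a⟩ : ℝ)))) :=
        measurable_of_countable _
      have hψ : Measurable (fun v : (↥s → ℤ) =>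
          ENNReal.ofReal (Real.exp (θ * ((∑ i ∈ s.attach, v i : ℤ) : ℝ)))) :=
        measurable_of_countable _
      have heq : (fun ω => ENNReal.ofReal (Real.exp (θ * ((∑ i ∈ s, D i ω : ℤ) : ℝ))))
          = (fun v : (↥s → ℤ) =>
              ENNReal.ofReal (Real.exp (θ * ((∑ i ∈ s.attach, v i : ℤ) : ℝ))))
            ∘ (fun ω (i : ↥s) => D i ω) := by
        funext ω
        simp only [Function.comp_apply]
        rw [Finset.sum_attach s (fun i => D i ω)]
      rw [heq]
      exact hbase.comp hφ hψ
    have hsplit : ∀ ω, ENNReal.ofReal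
          (Real.exp (θ * ((∑ i ∈ insert a s, D i ω : ℤ) : ℝ)))
        = ENNReal.ofReal (Real.exp (θ * (D a ω : ℝ)))
          * ENNReal.ofReal (Real.exp (θ * ((∑ i ∈ s, D i ω : ℤ) : ℝ))) := by
      intro ω
      rw [Finset.sum_insert ha, ← ENNReal.ofReal_mul (Real.exp_nonneg _), ← Real.exp_add]
      push_cast
      ring_nf
    calc ∫⁻ ω, ENNReal.ofReal (Real.exp (θ * ((∑ i ∈ insert a s, D i ω : ℤ) : ℝ))) ∂P
        = ∫⁻ ω, ((fun ω => ENNReal.ofReal (Real.exp (θ * (D a ω : ℝ))))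
            * fun ω => ENNReal.ofReal (Real.exp (θ * ((∑ i ∈ s, D i ω : ℤ) : ℝ)))) ω ∂P := by
          simp only [Pi.mul_apply]; exact lintegral_congr hsplit
      _ = (∫⁻ ω, ENNReal.ofReal (Real.exp (θ * (D a ω : ℝ))) ∂P)
            * ∫⁻ ω, ENNReal.ofReal (Real.exp (θ * ((∑ i ∈ s, D i ω : ℤ) : ℝ))) ∂P := by
          refine lintegral_mul_eq_lintegral_mul_lintegral_of_indepFun ?_ ?_ hfg
          · exact (measurable_of_countable (fun z : ℤ => ENNReal.ofReal (Real.exp (θ * z)))).comp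
              (hD a)
          · exact (measurable_of_countable (fun z : ℤ => ENNReal.ofReal (Real.exp (θ * z)))).comp
              (Finset.measurable_sum s (fun i _ => hD i))
      _ = ENNReal.ofReal (Real.cosh θ) ^ (insert a s).card := by
          rw [lintegral_exp_pm P (D a) (hD a) (hpm a).1 (hpm a).2 θ, ih,
            Finset.card_insert_of_notMem ha, pow_succ]
          ring


/-- Maximal inequality for the discrete simple symmetric random walk. -/
lemma discrete_max (X : ℕ → Ω → ℤ) (hX : ∀ n, Measurable (X n)) (hX0 : ∀ ω, X 0 ω = 0)
    (hind : iIndepFun (fun n ω => X (n + 1) ω - X n ω) P)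
    (hpm : ∀ n : ℕ, P {ω | X (n + 1) ω - X n ω = 1} = ENNReal.ofReal (1 / 2) ∧
      P {ω | X (n + 1) ω - X n ω = -1} = ENNReal.ofReal (1 / 2))
    (θ : ℝ) (hθ : 0 < θ) (c : ℝ) (k : ℕ) :
    P {ω | ∃ n ≤ k, c ≤ (X n ω : ℝ)}
      ≤ ENNReal.ofReal (Real.exp (-(θ * c)) * Real.cosh θ ^ k) := by
  classical
  set D : ℕ → Ω → ℤ := fun n ω => X (n + 1) ω - X n ω with hD
  have hDmeas : ∀ n, Measurable (D n) := fun n => (hX (n + 1)).sub (hX n)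
  have hXsum : ∀ m ω, X m ω = ∑ i ∈ Finset.range m, D i ω := by
    intro m ω
    rw [Finset.sum_range_sub (fun i => X i ω) m, hX0 ω, sub_zero]
  have hIco : ∀ n ω, n ≤ k → X k ω - X n ω = ∑ i ∈ Finset.Ico n k, D i ω := by
    intro n ω hnk
    rw [Finset.sum_Ico_eq_sub _ hnk, ← hXsum, ← hXsum]
  -- the first-passage events
  set T : ℕ → Set Ω := fun n =>
    {ω | c ≤ (X n ω : ℝ) ∧ ∀ m < n, ¬ c ≤ (X m ω : ℝ)} with hT
  have hTmeas : ∀ n, MeasurableSet (T n) := by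
    intro n
    have h1 : ∀ m : ℕ, MeasurableSet {ω | c ≤ (X m ω : ℝ)} := fun m =>
      hX m ((Set.to_countable {z : ℤ | c ≤ (z : ℝ)}).measurableSet)
    have : T n = {ω | c ≤ (X n ω : ℝ)} ∩ ⋂ m ∈ Finset.range n, {ω | c ≤ (X m ω : ℝ)}ᶜ := by
      ext ω; simp [hT]
    rw [this]
    exact (h1 n).inter
      (MeasurableSet.biInter (Finset.range n).countable_toSet fun m _ => (h1 m).compl)
  have hTdisj : ∀ m n : ℕ, m < n → Disjoint (T m) (T n) := by
    intro m n hmn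
    rw [Set.disjoint_left]
    rintro ω ⟨h1, -⟩ ⟨-, h2⟩
    exact h2 m hmn h1
  have hcover : {ω | ∃ n ≤ k, c ≤ (X n ω : ℝ)} ⊆ ⋃ n ∈ Finset.range (k + 1), T n := by
    intro ω hω
    obtain ⟨n, hnk, hcn⟩ := hω
    have hex : ∃ m, c ≤ (X m ω : ℝ) := ⟨n, hcn⟩
    have hmem : Nat.find hex ∈ Finset.range (k + 1) :=
      Finset.mem_range.mpr (lt_of_le_of_lt ((Nat.find_le hcn).trans hnk) (Nat.lt_succ_self k))
    simp only [Set.mem_iUnion]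
    exact ⟨Nat.find hex, hmem, Nat.find_spec hex, fun m hm => Nat.find_min hex hm⟩
  -- the functions in the factorization
  set f : ℕ → Ω → ENNReal := fun n =>
    (T n).indicator (fun ω => ENNReal.ofReal (Real.exp (θ * (X n ω : ℝ)))) with hf
  set g : ℕ → Ω → ENNReal := fun n ω =>
    ENNReal.ofReal (Real.exp (θ * ((X k ω - X n ω : ℤ) : ℝ))) with hg
  have hfmeas : ∀ n, Measurable (f n) := fun n =>
    (((measurable_of_countable (fun z : ℤ => ENNReal.ofReal (Real.exp (θ * z)))).comp
      (hX n))).indicator (hTmeas n)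
  have hgmeas : ∀ n, Measurable (g n) := fun n =>
    (measurable_of_countable (fun z : ℤ => ENNReal.ofReal (Real.exp (θ * z)))).comp
      ((hX k).sub (hX n))
  -- independence of f n and g n
  have hfg : ∀ n ≤ k, IndepFun (f n) (g n) P := by
    intro n hnk
    have hbase := hind.indepFun_finset (Finset.range n) (Finset.Ico n k)
      (Finset.disjoint_left.mpr (fun i hi hi' => by
        rw [Finset.mem_range] at hi; rw [Finset.mem_Ico] at hi'; omega)) hDmeas
    -- φ reconstructs f n from the first n increments
    set x : (↥(Finset.range n) → ℤ) → ℕ → ℤ := fun v m =>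
      ∑ i ∈ (Finset.range n).attach, if (i : ℕ) < m then v i else 0 with hx
    set φ : (↥(Finset.range n) → ℤ) → ENNReal := fun v =>
      if c ≤ ((x v n : ℤ) : ℝ) ∧ ∀ m < n, ¬ c ≤ ((x v m : ℤ) : ℝ)
        then ENNReal.ofReal (Real.exp (θ * ((x v n : ℤ) : ℝ))) else 0 with hφ
    set ψ : (↥(Finset.Ico n k) → ℤ) → ENNReal := fun v =>
      ENNReal.ofReal (Real.exp (θ * ((∑ i ∈ (Finset.Ico n k).attach, v i : ℤ) : ℝ))) with hψ
    have hxval : ∀ ω, ∀ m ≤ n, x (fun i : ↥(Finset.range n) => D i ω) m = X m ω := by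
      intro ω m hm
      rw [hXsum m ω]
      show ∑ i ∈ (Finset.range n).attach, (if (i : ℕ) < m then D i ω else 0)
        = ∑ i ∈ Finset.range m, D i ω
      rw [Finset.sum_attach (Finset.range n) (fun i => if i < m then D i ω else 0),
        ← Finset.sum_filter]
      congr 1
      ext i
      simp only [Finset.mem_filter, Finset.mem_range]
      omega
    have heqf : f n = φ ∘ (fun ω (i : ↥(Finset.range n)) => D i ω) := by
      funext ω
      simp only [Function.comp_apply, hφ, hf]
      rw [hxval ω n le_rfl]
      by_cases hω : ω ∈ T n
      · rw [Set.indicator_of_mem hω]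
        rw [if_pos]
        refine ⟨hω.1, fun m hm => ?_⟩
        rw [hxval ω m hm.le]
        exact hω.2 m hm
      · rw [Set.indicator_of_notMem hω, if_neg]
        intro ⟨h1, h2⟩
        exact hω ⟨h1, fun m hm => by rw [← hxval ω m hm.le]; exact h2 m hm⟩
    have heqg : g n = ψ ∘ (fun ω (i : ↥(Finset.Ico n k)) => D i ω) := by
      funext ω
      simp only [Function.comp_apply, hψ, hg]
      rw [Finset.sum_attach (Finset.Ico n k) (fun i => D i ω), ← hIco n ω hnk]
    rw [heqf, heqg]
    exact hbase.comp (measurable_of_countable φ) (measurable_of_countable ψ)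
  -- the expectation of g n
  have hgint : ∀ n ≤ k, ∫⁻ ω, g n ω ∂P = ENNReal.ofReal (Real.cosh θ) ^ (k - n) := by
    intro n hnk
    have : ∀ ω, g n ω = ENNReal.ofReal
        (Real.exp (θ * ((∑ i ∈ Finset.Ico n k, D i ω : ℤ) : ℝ))) := by
      intro ω; rw [hg]; simp only; rw [hIco n ω hnk]
    rw [lintegral_congr this, lintegral_exp_sum P D hDmeas hind hpm θ, Nat.card_Ico]
  have hcosh1 : (1 : ℝ) ≤ Real.cosh θ := Real.one_le_cosh θ
  -- the expectation of exp (θ X k)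
  have hXkint : ∫⁻ ω, ENNReal.ofReal (Real.exp (θ * (X k ω : ℝ))) ∂P
      = ENNReal.ofReal (Real.cosh θ) ^ k := by
    have : ∀ ω, ENNReal.ofReal (Real.exp (θ * (X k ω : ℝ)))
        = ENNReal.ofReal (Real.exp (θ * ((∑ i ∈ Finset.range k, D i ω : ℤ) : ℝ))) := by
      intro ω; rw [← hXsum]
    rw [lintegral_congr this, lintegral_exp_sum P D hDmeas hind hpm θ, Finset.card_range]
  -- main chain
  have main : ENNReal.ofReal (Real.exp (θ * c)) * P {ω | ∃ n ≤ k, c ≤ (X n ω : ℝ)}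
      ≤ ENNReal.ofReal (Real.cosh θ) ^ k := by
    calc ENNReal.ofReal (Real.exp (θ * c)) * P {ω | ∃ n ≤ k, c ≤ (X n ω : ℝ)}
        ≤ ENNReal.ofReal (Real.exp (θ * c)) * ∑ n ∈ Finset.range (k + 1), P (T n) := by
          exact mul_le_mul_right ((measure_mono hcover).trans
            (measure_biUnion_finset_le _ _)) _
      _ = ∑ n ∈ Finset.range (k + 1), ENNReal.ofReal (Real.exp (θ * c)) * P (T n) := by
          rw [Finset.mul_sum]
      _ ≤ ∑ n ∈ Finset.range (k + 1), ∫⁻ ω, f n ω ∂P := by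
          refine Finset.sum_le_sum fun n _ => ?_
          rw [← lintegral_indicator_const (hTmeas n)]
          refine lintegral_mono fun ω => ?_
          simp only [hf]
          by_cases hω : ω ∈ T n
          · simp only [Set.indicator_of_mem hω]
            exact ENNReal.ofReal_le_ofReal
              (Real.exp_le_exp.mpr (mul_le_mul_of_nonneg_left hω.1 hθ.le))
          · simp only [Set.indicator_of_notMem hω]
            exact le_rfl
      _ ≤ ∑ n ∈ Finset.range (k + 1), (∫⁻ ω, f n ω ∂P) * ∫⁻ ω, g n ω ∂P := by
          refine Finset.sum_le_sum fun n hn => ?_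
          have hnk : n ≤ k := by simpa [Nat.lt_succ_iff] using Finset.mem_range.mp hn
          refine le_mul_of_one_le_right' ?_
          rw [hgint n hnk]
          exact one_le_pow_of_one_le' (by
            rw [show (1 : ENNReal) = ENNReal.ofReal 1 by simp]
            exact ENNReal.ofReal_le_ofReal hcosh1) _
      _ = ∑ n ∈ Finset.range (k + 1), ∫⁻ ω, (f n * g n) ω ∂P := by
          refine Finset.sum_congr rfl fun n hn => ?_
          have hnk : n ≤ k := by simpa [Nat.lt_succ_iff] using Finset.mem_range.mp hn
          exact (lintegral_mul_eq_lintegral_mul_lintegral_of_indepFun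
            (hfmeas n) (hgmeas n) (hfg n hnk)).symm
      _ = ∑ n ∈ Finset.range (k + 1),
            ∫⁻ ω, (T n).indicator (fun ω => ENNReal.ofReal (Real.exp (θ * (X k ω : ℝ)))) ω ∂P := by
          refine Finset.sum_congr rfl fun n _ => lintegral_congr fun ω => ?_
          simp only [Pi.mul_apply, hf, hg]
          by_cases hω : ω ∈ T n
          · simp only [Set.indicator_of_mem hω]
            rw [← ENNReal.ofReal_mul (Real.exp_nonneg _), ← Real.exp_add]
            congr 2
            push_cast
            ring
          · simp only [Set.indicator_of_notMem hω, zero_mul]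
      _ = ∫⁻ ω, ∑ n ∈ Finset.range (k + 1),
            (T n).indicator (fun ω => ENNReal.ofReal (Real.exp (θ * (X k ω : ℝ)))) ω ∂P := by
          rw [lintegral_finset_sum]
          intro n _
          exact ((measurable_of_countable
            (fun z : ℤ => ENNReal.ofReal (Real.exp (θ * z)))).comp (hX k)).indicator (hTmeas n)
      _ ≤ ∫⁻ ω, ENNReal.ofReal (Real.exp (θ * (X k ω : ℝ))) ∂P := by
          refine lintegral_mono fun ω => ?_
          by_cases hω : ∃ n ∈ Finset.range (k + 1), ω ∈ T n
          · obtain ⟨n₀, hn₀, hωn₀⟩ := hω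
            rw [Finset.sum_eq_single_of_mem n₀ hn₀]
            · rw [Set.indicator_of_mem hωn₀]
            · intro m hm hmn
              rcases lt_or_gt_of_ne hmn with h | h
              · exact Set.indicator_of_notMem
                  (Set.disjoint_right.mp (hTdisj m n₀ h) hωn₀) _
              · exact Set.indicator_of_notMem
                  (Set.disjoint_left.mp (hTdisj n₀ m h) hωn₀) _
          · push_neg at hω
            rw [Finset.sum_eq_zero fun m hm => Set.indicator_of_notMem (hω m hm) _]
            exact zero_le
      _ = ENNReal.ofReal (Real.cosh θ) ^ k := hXkint
  -- conclude
  have hcancel : ENNReal.ofReal (Real.exp (-(θ * c))) * ENNReal.ofReal (Real.exp (θ * c))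
      = 1 := by
    rw [← ENNReal.ofReal_mul (Real.exp_nonneg _), ← Real.exp_add]
    simp
  calc P {ω | ∃ n ≤ k, c ≤ (X n ω : ℝ)}
      = ENNReal.ofReal (Real.exp (-(θ * c))) * (ENNReal.ofReal (Real.exp (θ * c))
          * P {ω | ∃ n ≤ k, c ≤ (X n ω : ℝ)}) := by
        rw [← mul_assoc, hcancel, one_mul]
    _ ≤ ENNReal.ofReal (Real.exp (-(θ * c))) * ENNReal.ofReal (Real.cosh θ) ^ k :=
        mul_le_mul_right main _
    _ = ENNReal.ofReal (Real.exp (-(θ * c)) * Real.cosh θ ^ k) := by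
        rw [← ENNReal.ofReal_pow (by positivity), ← ENNReal.ofReal_mul (Real.exp_nonneg _)]



lemma single_walk (ζ : ℝ → Ω → ℤ) (h : IsSSRW P ζ) (θ c t : ℝ) (hθ : 0 < θ) (ht : 0 ≤ t) :
    P {ω | ∃ s : ℝ, 0 ≤ s ∧ s ≤ t ∧ c ≤ (ζ s ω : ℝ)}
      ≤ ENNReal.ofReal (Real.exp (-(θ * c)) * Real.exp (2 * (Real.cosh θ - 1) * t)) := by
  obtain ⟨X, N, hXmeas, hNmeas, hX0, hN0, hNmono, hXind, hpm, hPois, -, hNX, hzeta⟩ := h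
  set M : ℕ → Set Ω := fun k => {ω | ∃ n ≤ k, c ≤ (X n ω : ℝ)} with hM
  have hsub : {ω | ∃ s : ℝ, 0 ≤ s ∧ s ≤ t ∧ c ≤ (ζ s ω : ℝ)}
      ⊆ ⋃ k : ℕ, ({ω | N t ω = k} ∩ M k) := by
    rintro ω ⟨s, hs0, hst, hcs⟩
    refine Set.mem_iUnion.mpr ⟨N t ω, rfl, ?_⟩
    refine ⟨N s ω, hNmono ω hst, ?_⟩
    rw [← hzeta s ω]
    exact hcs
  have hNk : ∀ k : ℕ, P {ω | N t ω = k}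
      = ENNReal.ofReal (Real.exp (-(2 * t)) * (2 * t) ^ k / (Nat.factorial k)) := by
    intro k
    have := hPois 0 t le_rfl ht k
    have hset : {ω | N t ω - N 0 ω = k} = {ω | N t ω = k} := by
      ext ω; simp [hN0 ω]
    rw [hset] at this
    rw [this, sub_zero]
  have hsplit : ∀ k : ℕ, P ({ω | N t ω = k} ∩ M k) = P {ω | N t ω = k} * P (M k) := by
    intro k
    have hUmeas : MeasurableSet {f : ℕ → ℤ | ∃ n ≤ k, c ≤ (f n : ℝ)} := by
      have : {f : ℕ → ℤ | ∃ n ≤ k, c ≤ (f n : ℝ)}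
          = ⋃ n ∈ Finset.range (k + 1), (fun f : ℕ → ℤ => f n) ⁻¹' {z : ℤ | c ≤ (z : ℝ)} := by
        ext f
        simp only [Set.mem_setOf_eq, Set.mem_iUnion, Set.mem_preimage, Finset.mem_range,
          Nat.lt_succ_iff]
        exact exists_congr fun n => by tauto
      rw [this]
      exact MeasurableSet.biUnion (Finset.range (k + 1)).countable_toSet
        (fun n _ => (measurable_pi_apply n) ((Set.to_countable _).measurableSet))
    have hSmeas : MeasurableSet {g : ℝ → ℕ | g t = k} := by
      have : {g : ℝ → ℕ | g t = k} = (fun g : ℝ → ℕ => g t) ⁻¹' {k} := rfl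
      rw [this]
      exact (measurable_pi_apply t) (measurableSet_singleton k)
    have := hNX.measure_inter_preimage_eq_mul (μ := P) _ _ hSmeas hUmeas
    convert this using 2 <;> rfl
  have hMk : ∀ k : ℕ, P (M k) ≤ ENNReal.ofReal (Real.exp (-(θ * c)) * Real.cosh θ ^ k) :=
    fun k => discrete_max P X hXmeas hX0 hXind hpm θ hθ c k
  have hterm : ∀ k : ℕ, P {ω | N t ω = k} * P (M k)
      ≤ ENNReal.ofReal ((Real.exp (-(θ * c)) * Real.exp (-(2 * t)))
          * ((2 * t * Real.cosh θ) ^ k / (Nat.factorial k))) := by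
    intro k
    rw [hNk k]
    refine le_trans (mul_le_mul_right (hMk k) _) ?_
    rw [← ENNReal.ofReal_mul (by positivity)]
    refine ENNReal.ofReal_le_ofReal (le_of_eq ?_)
    rw [mul_pow]
    field_simp
    ring
  calc P {ω | ∃ s : ℝ, 0 ≤ s ∧ s ≤ t ∧ c ≤ (ζ s ω : ℝ)}
      ≤ ∑' k : ℕ, P ({ω | N t ω = k} ∩ M k) :=
        (measure_mono hsub).trans (measure_iUnion_le _)
    _ ≤ ∑' k : ℕ, ENNReal.ofReal ((Real.exp (-(θ * c)) * Real.exp (-(2 * t)))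
          * ((2 * t * Real.cosh θ) ^ k / (Nat.factorial k))) := by
        refine ENNReal.tsum_le_tsum fun k => ?_
        rw [hsplit k]
        exact hterm k
    _ = ENNReal.ofReal (∑' k : ℕ, (Real.exp (-(θ * c)) * Real.exp (-(2 * t)))
          * ((2 * t * Real.cosh θ) ^ k / (Nat.factorial k))) := by
        refine (ENNReal.ofReal_tsum_of_nonneg (fun k => by positivity) ?_).symm
        exact (Real.summable_pow_div_factorial (2 * t * Real.cosh θ)).mul_left _
    _ = ENNReal.ofReal (Real.exp (-(θ * c)) * Real.exp (2 * (Real.cosh θ - 1) * t)) := by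
        congr 1
        rw [tsum_mul_left]
        have hexp : ∑' k : ℕ, (2 * t * Real.cosh θ) ^ k / (Nat.factorial k : ℝ)
            = Real.exp (2 * t * Real.cosh θ) := by
          rw [Real.exp_eq_exp_ℝ, NormedSpace.exp_eq_tsum_div]
        rw [hexp, mul_assoc, ← Real.exp_add]
        congr 2
        ring


end Helpers

/-- Lemma bounding the probability that some particle of a configuration `w = (F, r, A)`
of independent rate-2 simple symmetric random walks exceeds `r + γ t` by time `t`:
`P(sup_{(x,i) ∈ A} sup_{0 ≤ s ≤ t} F_s(x,i) ≥ r + γ t) ≤ f_θ(w) exp(−g_γ(θ) t)`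
with `g_γ(θ) = γθ − 2(cosh θ − 1)` and `f_θ(w) = ∑_{(x,i) ∈ A} exp(θ(F(x,i) − r))`. -/
theorem remote_particles_bound
    {Ω : Type} [mΩ : MeasurableSpace Ω] (P : Measure Ω) [IsProbabilityMeasure P]
    (a : ℕ) (ha : 1 ≤ a)
    (A : Set (ℤ × ℕ)) (hAne : A.Nonempty) (hAa : ∀ p ∈ A, p.2 < a)
    (F : ℤ × ℕ → ℤ) (r : ℤ) (hF : ∀ p ∈ A, F p ≤ r)
    (ζ : ℤ × ℕ → ℝ → Ω → ℤ) (hζ : ∀ p, IsSSRW P (ζ p))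
    (hindep : iIndepFun
      (fun (p : ℤ × ℕ) ω => (fun s : ℝ => ζ p s ω)) P)
    (θ γ : ℝ) (hθ : 0 < θ) (hγ : 0 < γ)
    (hsum : Summable (fun p : A => Real.exp (θ * ((F p : ℝ) - (r : ℝ))))) :
    ∀ t : ℝ, 0 ≤ t →
      P {ω | ∃ p ∈ A, ∃ s : ℝ, 0 ≤ s ∧ s ≤ t ∧
          (r : ℝ) + γ * t ≤ (F p : ℝ) + (ζ p s ω : ℝ)} ≤
        ENNReal.ofReal
          ((∑' p : A, Real.exp (θ * ((F p : ℝ) - (r : ℝ)))) *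
            Real.exp (-(γ * θ - 2 * (Real.cosh θ - 1)) * t)) := by
  intro t ht
  set C := Real.exp (-(γ * θ - 2 * (Real.cosh θ - 1)) * t) with hC
  have hsingle : ∀ p : A, P {ω | ∃ s : ℝ, 0 ≤ s ∧ s ≤ t ∧
      ((r : ℝ) + γ * t - (F p : ℝ)) ≤ ((ζ p s ω : ℤ) : ℝ)}
      ≤ ENNReal.ofReal (Real.exp (θ * ((F p : ℝ) - (r : ℝ))) * C) := by
    intro p
    refine le_trans (single_walk P (ζ p) (hζ p) θ _ t hθ ht) (le_of_eq ?_)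
    congr 1
    rw [hC, ← Real.exp_add, ← Real.exp_add]
    congr 1
    ring
  have hcover : {ω | ∃ p ∈ A, ∃ s : ℝ, 0 ≤ s ∧ s ≤ t ∧
        (r : ℝ) + γ * t ≤ (F p : ℝ) + (ζ p s ω : ℝ)}
      = ⋃ p : A, {ω | ∃ s : ℝ, 0 ≤ s ∧ s ≤ t ∧
        ((r : ℝ) + γ * t - (F (p : ℤ × ℕ) : ℝ)) ≤ ((ζ p s ω : ℤ) : ℝ)} := by
    ext ω
    simp only [Set.mem_iUnion, Set.mem_setOf_eq, Subtype.exists]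
    constructor
    · rintro ⟨p, hp, s, h1, h2, h3⟩
      exact ⟨p, hp, s, h1, h2, by push_cast at h3 ⊢; linarith⟩
    · rintro ⟨p, hp, s, h1, h2, h3⟩
      exact ⟨p, hp, s, h1, h2, by push_cast at h3 ⊢; linarith⟩
  rw [hcover]
  calc P (⋃ p : A, {ω | ∃ s : ℝ, 0 ≤ s ∧ s ≤ t ∧
        ((r : ℝ) + γ * t - (F (p : ℤ × ℕ) : ℝ)) ≤ ((ζ p s ω : ℤ) : ℝ)})
      ≤ ∑' p : A, P {ω | ∃ s : ℝ, 0 ≤ s ∧ s ≤ t ∧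
        ((r : ℝ) + γ * t - (F (p : ℤ × ℕ) : ℝ)) ≤ ((ζ p s ω : ℤ) : ℝ)} :=
        measure_iUnion_le _
    _ ≤ ∑' p : A, ENNReal.ofReal (Real.exp (θ * ((F p : ℝ) - (r : ℝ))) * C) :=
        ENNReal.tsum_le_tsum hsingle
    _ = ENNReal.ofReal (∑' p : A, Real.exp (θ * ((F p : ℝ) - (r : ℝ))) * C) :=
        (ENNReal.ofReal_tsum_of_nonneg (fun p => by positivity) (hsum.mul_right C)).symm
    _ = ENNReal.ofReal ((∑' p : A, Real.exp (θ * ((F p : ℝ) - (r : ℝ)))) * C) := by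
        rw [tsum_mul_right]
end
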